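/- arXiv:2405.03560 — 6 statements merged into one kernel-verified Lean document; each statement's English description precedes it below -/
import Mathlib

section
/- Let τ > 0 and suppose the index set I has at least two elements. Then S∞_adw(τ) ⊆ S̄(τ), and the inclusion is strict: every σ belonging to S_adw(τ,N₀) for some N₀ ∈ ℕ satisfies limsup_{t→∞}(N_σ(0,t) − t/τ) < +∞, and there exists a switching signal σ ∈ S̄(τ) that belongs to S_adw(τ,N₀) for no N₀ ∈ ℕ (for instance, a signal having exactly k−1 discontinuity points in each interval [k²τ, (k²+1)τ), k ≥ 1, and constant otherwise). -/
noncomputable section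

/-- A switching signal over the index set `I`: a piecewise-constant right-continuous
function `toFun : [０,∞) → I` together with its set of switching instants
(`0` is counted as a switching instant; the positive switching instants are exactly
the discontinuity points of the signal, and the set of instants is locally finite). -/
structure SwitchingSignal (I : Type*) where
  toFun : ℝ → I
  instants : Set ℝ
  zero_mem : (0 : ℝ) ∈ instants
  nonneg : ∀ t ∈ instants, (0 : ℝ) ≤ t
  finite_le : ∀ T : ℝ, (instants ∩ Set.Iic T).Finite
  const_between : ∀ s t : ℝ, 0 ≤ s → s ≤ t → instants ∩ Set.Ioc s t = ∅ → toFun s = toFun t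
  jump : ∀ t ∈ instants, 0 < t → ∀ s : ℝ, 0 ≤ s → s < t → instants ∩ Set.Ioo s t = ∅ →
    toFun s ≠ toFun t

/-- `Nsw σ s t` : the number of switching instants of `σ` in the interval `[s, t)`. -/
def Nsw {I : Type*} (σ : SwitchingSignal I) (s t : ℝ) : ℕ :=
  (σ.instants ∩ Set.Ico s t).ncard

/-- The class of `τ` dwell-time signals: any two consecutive switching instants
are at least `τ` apart. -/
def Sdw {I : Type*} (τ : ℝ) (σ : SwitchingSignal I) : Prop :=
  ∀ a b : ℝ, a ∈ σ.instants → b ∈ σ.instants → a < b →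
    σ.instants ∩ Set.Ioo a b = ∅ → τ ≤ b - a

/-- The class of `(τ, N₀)` average dwell-time signals. -/
def Sadw {I : Type*} (τ : ℝ) (N₀ : ℕ) (σ : SwitchingSignal I) : Prop :=
  ∀ s t : ℝ, 0 ≤ s → s ≤ t → (Nsw σ s t : ℝ) ≤ (N₀ : ℝ) + (t - s) / τ

/-- The class of `τ` average dwell-time signals (arbitrary chattering bound). -/
def SadwInf {I : Type*} (τ : ℝ) (σ : SwitchingSignal I) : Prop :=
  ∃ N₀ : ℕ, Sadw τ N₀ σ

/-- The class of eventually `τ`-average signals: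
`limsup_{t→∞} (N_σ(0,t) - t/τ) < +∞`. -/
def Sbar {I : Type*} (τ : ℝ) (σ : SwitchingSignal I) : Prop :=
  ∃ C : ℝ, ∀ᶠ t in Filter.atTop, (Nsw σ 0 t : ℝ) - t / τ ≤ C

/-- Class `K` comparison functions. -/
def IsClassK (α : ℝ → ℝ) : Prop :=
  ContinuousOn α (Set.Ici 0) ∧ α 0 = 0 ∧ StrictMonoOn α (Set.Ici 0)

/-- Class `K∞` comparison functions. -/
def IsClassKInf (α : ℝ → ℝ) : Prop :=
  IsClassK α ∧ ∀ M : ℝ, ∃ r : ℝ, 0 ≤ r ∧ M ≤ α r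

/-- Class `KL` comparison functions. -/
def IsClassKL (β : ℝ → ℝ → ℝ) : Prop :=
  ContinuousOn (fun p : ℝ × ℝ => β p.1 p.2) (Set.Ici 0 ×ˢ Set.Ici 0) ∧
  (∀ t : ℝ, 0 ≤ t → β 0 t = 0 ∧ StrictMonoOn (fun r => β r t) (Set.Ici 0)) ∧
  (∀ r : ℝ, 0 ≤ r → AntitoneOn (fun t => β r t) (Set.Ici 0) ∧
    Filter.Tendsto (fun t => β r t) Filter.atTop (nhds 0)) ∧
  (∀ r t : ℝ, 0 ≤ r → 0 ≤ t → 0 ≤ β r t)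

/-- A (Carathéodory, forward) solution of the switched system `ẋ = f_{σ(t)}(x)`
relative to the switching signal `σ`: continuous on `[0,∞)` and at each `t ≥ 0`
right-differentiable with right derivative `f_{σ(t)}(x(t))`. -/
def IsSolution {I : Type*} {n : ℕ}
    (f : I → EuclideanSpace ℝ (Fin n) → EuclideanSpace ℝ (Fin n))
    (σ : SwitchingSignal I) (x : ℝ → EuclideanSpace ℝ (Fin n)) : Prop :=
  ContinuousOn x (Set.Ici 0) ∧
    ∀ t : ℝ, 0 ≤ t → HasDerivWithinAt x (f (σ.toFun t) (x t)) (Set.Ici t) t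

/-- A solution of the single subsystem `ẋ = f_i(x)`. -/
def IsSubSolution {I : Type*} {n : ℕ}
    (f : I → EuclideanSpace ℝ (Fin n) → EuclideanSpace ℝ (Fin n))
    (i : I) (x : ℝ → EuclideanSpace ℝ (Fin n)) : Prop :=
  ContinuousOn x (Set.Ici 0) ∧
    ∀ t : ℝ, 0 ≤ t → HasDerivWithinAt x (f i (x t)) (Set.Ici t) t

/-- Well-posedness of the family `{f_i}`: each `f_i` vanishes at the origin and each
subsystem has a unique forward solution from every initial condition; `Φ i` is the
corresponding (semi-)flow. -/
structure WellPosed {I : Type*} {n : ℕ}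
    (f : I → EuclideanSpace ℝ (Fin n) → EuclideanSpace ℝ (Fin n)) where
  zero : ∀ i, f i 0 = 0
  Φ : I → ℝ → EuclideanSpace ℝ (Fin n) → EuclideanSpace ℝ (Fin n)
  isSol : ∀ i x₀, IsSubSolution f i (fun t => Φ i t x₀)
  init : ∀ i x₀, Φ i 0 x₀ = x₀
  unique : ∀ (i : I) (x₀ : EuclideanSpace ℝ (Fin n)) (y : ℝ → EuclideanSpace ℝ (Fin n)),
    IsSubSolution f i y → y 0 = x₀ → ∀ t : ℝ, 0 ≤ t → y t = Φ i t x₀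

/-- Uniform global asymptotic stability with respect to a class of switching signals. -/
def UGAS {I : Type*} {n : ℕ}
    (f : I → EuclideanSpace ℝ (Fin n) → EuclideanSpace ℝ (Fin n))
    (Scl : SwitchingSignal I → Prop) : Prop :=
  ∃ β : ℝ → ℝ → ℝ, IsClassKL β ∧
    ∀ σ : SwitchingSignal I, Scl σ → ∀ x : ℝ → EuclideanSpace ℝ (Fin n),
      IsSolution f σ x → ∀ t : ℝ, 0 ≤ t → ‖x t‖ ≤ β ‖x 0‖ t

/-- Uniform global exponential stability with decay `ρ`, with respect to
a class of switching signals. -/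
def UGES {I : Type*} {n : ℕ}
    (f : I → EuclideanSpace ℝ (Fin n) → EuclideanSpace ℝ (Fin n))
    (ρ : ℝ) (Scl : SwitchingSignal I → Prop) : Prop :=
  ∃ M : ℝ, 0 ≤ M ∧
    ∀ σ : SwitchingSignal I, Scl σ → ∀ x : ℝ → EuclideanSpace ℝ (Fin n),
      IsSolution f σ x → ∀ t : ℝ, 0 ≤ t → ‖x t‖ ≤ M * Real.exp (-ρ * t) * ‖x 0‖

/-- `τ`-dependent uniform global boundedness (`τ`-UGB). -/
def TauUGB {I : Type*} {n : ℕ}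
    (f : I → EuclideanSpace ℝ (Fin n) → EuclideanSpace ℝ (Fin n)) (τ : ℝ) : Prop :=
  ∃ η₁ η₂ : ℝ → ℝ, ∃ α : ℝ, IsClassKInf η₁ ∧ IsClassKInf η₂ ∧ 0 ≤ α ∧
    ∀ σ : SwitchingSignal I, ∀ x : ℝ → EuclideanSpace ℝ (Fin n), IsSolution f σ x →
      ∀ t : ℝ, 0 ≤ t →
        ‖x t‖ ≤ η₁ (Real.exp (α * τ * (Nsw σ 0 t : ℝ)) * Real.exp (-(1 + α) * t) * η₂ ‖x 0‖)

/-- `τ`-dependent uniform global exponential boundedness with decay `ρ` (`τ`-UGEB_ρ). -/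
def TauUGEB {I : Type*} {n : ℕ}
    (f : I → EuclideanSpace ℝ (Fin n) → EuclideanSpace ℝ (Fin n)) (τ ρ : ℝ) : Prop :=
  ∃ M α : ℝ, 0 < M ∧ 0 ≤ α ∧
    ∀ σ : SwitchingSignal I, ∀ x : ℝ → EuclideanSpace ℝ (Fin n), IsSolution f σ x →
      ∀ t : ℝ, 0 ≤ t →
        ‖x t‖ ≤ M * Real.exp (α * τ * (Nsw σ 0 t : ℝ)) * Real.exp (-(ρ + α) * t) * ‖x 0‖

/-- `Lip₀`: locally Lipschitz on `ℝⁿ \ {0}`. -/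
def Lip0 {n : ℕ} (V : EuclideanSpace ℝ (Fin n) → ℝ) : Prop :=
  ∀ x : EuclideanSpace ℝ (Fin n), x ≠ 0 →
    ∃ (K : NNReal) (s : Set (EuclideanSpace ℝ (Fin n))), s ∈ nhds x ∧ LipschitzOnWith K V s

/-- The Dini derivative of `V` along the flow `Φi` :
`D⁺V(x) = limsup_{h→0⁺} (V(Φi(h,x)) - V(x))/h`, with values in `EReal`. -/
def dini {n : ℕ} (Φi : ℝ → EuclideanSpace ℝ (Fin n) → EuclideanSpace ℝ (Fin n))
    (V : EuclideanSpace ℝ (Fin n) → ℝ) (x : EuclideanSpace ℝ (Fin n)) : EReal :=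
  Filter.limsup (fun h : ℝ => (((V (Φi h x) - V x) / h : ℝ) : EReal))
    (nhdsWithin 0 (Set.Ioi 0))

/-- A solution of the switched linear system `ẋ = A_{σ(t)} x`. -/
def IsLinSolution {m n : ℕ} (A : Fin m → Matrix (Fin n) (Fin n) ℝ)
    (σ : SwitchingSignal (Fin m)) (x : ℝ → EuclideanSpace ℝ (Fin n)) : Prop :=
  ContinuousOn x (Set.Ici 0) ∧
    ∀ t : ℝ, 0 ≤ t →
      HasDerivWithinAt x (Matrix.toEuclideanLin (A (σ.toFun t)) (x t)) (Set.Ici t) t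

/-- UGES_ρ for the switched linear system, w.r.t. a class of switching signals. -/
def LinUGES {m n : ℕ} (A : Fin m → Matrix (Fin n) (Fin n) ℝ) (ρ : ℝ)
    (Scl : SwitchingSignal (Fin m) → Prop) : Prop :=
  ∃ M : ℝ, 0 ≤ M ∧
    ∀ σ : SwitchingSignal (Fin m), Scl σ → ∀ x : ℝ → EuclideanSpace ℝ (Fin n),
      IsLinSolution A σ x → ∀ t : ℝ, 0 ≤ t → ‖x t‖ ≤ M * Real.exp (-ρ * t) * ‖x 0‖

/-- `τ`-UGEB_ρ for the switched linear system. -/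
def LinTauUGEB {m n : ℕ} (A : Fin m → Matrix (Fin n) (Fin n) ℝ) (τ ρ : ℝ) : Prop :=
  ∃ M α : ℝ, 0 < M ∧ 0 ≤ α ∧
    ∀ σ : SwitchingSignal (Fin m), ∀ x : ℝ → EuclideanSpace ℝ (Fin n),
      IsLinSolution A σ x → ∀ t : ℝ, 0 ≤ t →
        ‖x t‖ ≤ M * Real.exp (α * τ * (Nsw σ 0 t : ℝ)) * Real.exp (-(ρ + α) * t) * ‖x 0‖

/-- The Dini derivative of `v` along the linear flow of `A`:
`D⁺_A v(x) = limsup_{h→0⁺} (v(exp(hA)x) - v(x))/h`, with values in `EReal`. -/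
def diniLin {n : ℕ} (A : Matrix (Fin n) (Fin n) ℝ)
    (v : EuclideanSpace ℝ (Fin n) → ℝ) (x : EuclideanSpace ℝ (Fin n)) : EReal :=
  Filter.limsup
    (fun h : ℝ =>
      (((v (Matrix.toEuclideanLin (NormedSpace.exp (h • A)) x) - v x) / h : ℝ) : EReal))
    (nhdsWithin 0 (Set.Ioi 0))

/-- `v : ℝⁿ → ℝ` is a norm. -/
def IsNorm {n : ℕ} (v : EuclideanSpace ℝ (Fin n) → ℝ) : Prop :=
  (∀ x, v x = 0 ↔ x = 0) ∧
  (∀ (c : ℝ) (x : EuclideanSpace ℝ (Fin n)), v (c • x) = |c| * v x) ∧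
  (∀ x y : EuclideanSpace ℝ (Fin n), v (x + y) ≤ v x + v y)

/-- `Ψ_ε(t) = min_{s ∈ [0,t]} (ρ(s) + ε (t - s))`. -/
def Psi (ε : ℝ) (ρ : ℝ → ℝ) (t : ℝ) : ℝ :=
  sInf ((fun s => ρ s + ε * (t - s)) '' Set.Icc 0 t)

end

namespace AdwAux

/-- Cluster point: the `j`-th instant of the `k`-th cluster. -/
noncomputable def pt (τ : ℝ) (k j : ℕ) : ℝ := (k : ℝ)^2 * τ + j * (τ / k)

/-- The set of instants: `0` together with `k` points in `[k²τ, k²τ + τ)` for each `k ≥ 1`. -/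
def inst (τ : ℝ) : Set ℝ := {0} ∪ {x | ∃ k j : ℕ, 1 ≤ k ∧ j < k ∧ x = pt τ k j}

lemma pt_lower {τ : ℝ} (hτ : 0 < τ) {k : ℕ} (hk : 1 ≤ k) (j : ℕ) :
    (k : ℝ)^2 * τ ≤ pt τ k j := by
  have hk' : (0:ℝ) < k := by exact_mod_cast hk
  have h : (0:ℝ) ≤ (j:ℝ) * (τ / k) := by positivity
  unfold pt; linarith

lemma pt_upper {τ : ℝ} (hτ : 0 < τ) {k j : ℕ} (hk : 1 ≤ k) (hj : j < k) :
    pt τ k j < (k : ℝ)^2 * τ + τ := by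
  have hk' : (0:ℝ) < k := by exact_mod_cast hk
  have hj' : (j:ℝ) < k := by exact_mod_cast hj
  have h1 : (j:ℝ) * (τ / k) < (k:ℝ) * (τ / k) :=
    mul_lt_mul_of_pos_right hj' (div_pos hτ hk')
  have h2 : (k:ℝ) * (τ / k) = τ := by field_simp
  unfold pt; linarith

lemma inst_nonneg {τ : ℝ} (hτ : 0 < τ) : ∀ x ∈ inst τ, (0:ℝ) ≤ x := by
  rintro x (rfl | ⟨k, j, hk, hj, rfl⟩)
  · exact le_rfl
  · have hk' : (0:ℝ) < k := by exact_mod_cast hk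
    refine le_trans ?_ (pt_lower hτ hk j)
    positivity

lemma inst_finite_le {τ : ℝ} (hτ : 0 < τ) (T : ℝ) : (inst τ ∩ Set.Iic T).Finite := by
  set K : ℕ := ⌈T / τ⌉₊ + 1 with hKdef
  have hfin : (insert (0:ℝ)
      ((fun p : ℕ × ℕ => pt τ p.1 p.2) '' (Set.Iio K ×ˢ Set.Iio K))).Finite :=
    (((Set.finite_Iio K).prod (Set.finite_Iio K)).image _).insert 0
  refine hfin.subset ?_
  rintro x ⟨hx, hxT⟩
  rcases hx with rfl | ⟨k, j, hk, hj, rfl⟩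
  · exact Set.mem_insert _ _
  · right
    have hk1 : (1:ℝ) ≤ (k:ℝ) := by exact_mod_cast hk
    have hkK : k < K := by
      by_contra h
      push_neg at h
      have hKk : (K:ℝ) ≤ (k:ℝ) := by exact_mod_cast h
      have h1 : (k:ℝ)^2 * τ ≤ T := le_trans (pt_lower hτ hk j) hxT
      have h2 : T / τ < (K:ℝ) := by
        have hceil := Nat.le_ceil (T / τ)
        have : ((⌈T / τ⌉₊ : ℝ) + 1) = (K:ℝ) := by push_cast [hKdef]; ring
        linarith
      have h3 : T < (K:ℝ) * τ := by
        rw [div_lt_iff₀ hτ] at h2; linarith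
      have h4 : (k:ℝ) ≤ (k:ℝ)^2 := by nlinarith
      nlinarith [mul_le_mul_of_nonneg_right hKk hτ.le,
        mul_le_mul_of_nonneg_right h4 hτ.le]
    exact ⟨(k, j), ⟨hkK, lt_trans hj hkK⟩, rfl⟩

lemma ncard_split {τ : ℝ} (hτ : 0 < τ) {s t : ℝ} (hst : s ≤ t) :
    (inst τ ∩ Set.Iic t).ncard
      = (inst τ ∩ Set.Iic s).ncard + (inst τ ∩ Set.Ioc s t).ncard := by
  have h1 : inst τ ∩ Set.Iic t = (inst τ ∩ Set.Iic s) ∪ (inst τ ∩ Set.Ioc s t) := by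
    rw [← Set.inter_union_distrib_left, Set.Iic_union_Ioc_eq_Iic hst]
  have hdisj : Disjoint (inst τ ∩ Set.Iic s) (inst τ ∩ Set.Ioc s t) := by
    rw [Set.disjoint_left]
    rintro x ⟨-, hx1⟩ ⟨-, hx2, -⟩
    exact absurd hx1 (not_le.mpr hx2)
  rw [h1, Set.ncard_union_eq hdisj (inst_finite_le hτ s)
    ((inst_finite_le hτ t).subset (by rintro x ⟨hx, -, hx2⟩; exact ⟨hx, hx2⟩))]

/-- The bursty switching signal. -/
noncomputable def sig {I : Type*} (τ : ℝ) (hτ : 0 < τ) (a b : I) (hab : a ≠ b) :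
    SwitchingSignal I where
  toFun t := if Even ((inst τ ∩ Set.Iic t).ncard) then a else b
  instants := inst τ
  zero_mem := Or.inl rfl
  nonneg := inst_nonneg hτ
  finite_le := inst_finite_le hτ
  const_between := by
    intro s t _ hst hempty
    have h : inst τ ∩ Set.Iic t = inst τ ∩ Set.Iic s := by
      rw [← Set.Iic_union_Ioc_eq_Iic hst, Set.inter_union_distrib_left, hempty,
        Set.union_empty]
    simp only [h]
  jump := by
    intro t ht _ s _ hst hempty
    have hIoc : inst τ ∩ Set.Ioc s t = {t} := by
      ext x
      constructor
      · rintro ⟨hx1, hx2, hx3⟩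
        rcases eq_or_lt_of_le hx3 with h | h
        · exact h
        · have hmem : x ∈ inst τ ∩ Set.Ioo s t := ⟨hx1, hx2, h⟩
          rw [hempty] at hmem
          exact absurd hmem (Set.notMem_empty x)
      · rintro rfl; exact ⟨ht, hst, le_rfl⟩
    have hsplit := ncard_split hτ (le_of_lt hst)
    rw [hIoc, Set.ncard_singleton] at hsplit
    simp only [hsplit]
    rcases Nat.even_or_odd ((inst τ ∩ Set.Iic s).ncard) with h | h
    · rw [if_pos h, if_neg (by simp [Nat.even_add_one, h])]
      exact hab
    · rw [if_neg (by simp [Nat.not_even_iff_odd.mpr h]),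
        if_pos (Nat.even_add_one.mpr (Nat.not_even_iff_odd.mpr h))]
      exact hab.symm

lemma count_upper {τ : ℝ} (hτ : 0 < τ) {t : ℝ} (ht : 0 ≤ t) :
    ((inst τ ∩ Set.Ico 0 t).ncard : ℝ) ≤ 1 + t / τ := by
  set K : ℕ := Nat.sqrt ⌊t / τ⌋₊ with hKdef
  set F : Finset ℝ :=
    insert 0 ((Finset.Icc 1 K ×ˢ Finset.range K).image fun p : ℕ × ℕ => pt τ p.1 p.2)
    with hFdef
  have hsub : inst τ ∩ Set.Ico 0 t ⊆ ↑F := by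
    rintro x ⟨hx, -, hxt⟩
    rcases hx with rfl | ⟨k, j, hk, hj, rfl⟩
    · simp [hFdef]
    · have h1 : (k:ℝ)^2 * τ < t := lt_of_le_of_lt (pt_lower hτ hk j) hxt
      have h2 : (k:ℝ)^2 < t / τ := by
        rw [lt_div_iff₀ hτ]; linarith
      have h3 : (k^2 : ℕ) ≤ ⌊t / τ⌋₊ := Nat.le_floor (by push_cast; linarith)
      have h4 : k ≤ K := by
        rw [hKdef, Nat.le_sqrt]
        calc k * k = k^2 := by ring
          _ ≤ ⌊t / τ⌋₊ := h3
      simp only [hFdef, Finset.coe_insert, Set.mem_insert_iff, Finset.coe_image,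
        Set.mem_image]
      right
      refine ⟨(k, j), ?_, rfl⟩
      simp only [Finset.mem_coe, Finset.mem_product, Finset.mem_Icc, Finset.mem_range]
      exact ⟨⟨hk, h4⟩, lt_of_lt_of_le hj h4⟩
  have hcard : (inst τ ∩ Set.Ico 0 t).ncard ≤ F.card := by
    rw [← Set.ncard_coe_finset]
    exact Set.ncard_le_ncard hsub F.finite_toSet
  have hFcard : F.card ≤ 1 + K * K := by
    refine le_trans (Finset.card_insert_le _ _) ?_
    have h := Finset.card_image_le
      (s := Finset.Icc 1 K ×ˢ Finset.range K) (f := fun p : ℕ × ℕ => pt τ p.1 p.2)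
    have h2 : (Finset.Icc 1 K ×ˢ Finset.range K).card = K * K := by
      simp [Nat.card_Icc]
    omega
  have hK2 : ((K * K : ℕ) : ℝ) ≤ t / τ := by
    have h1 : K * K ≤ ⌊t / τ⌋₊ := Nat.sqrt_le ⌊t / τ⌋₊
    have h2 : ((⌊t / τ⌋₊ : ℕ) : ℝ) ≤ t / τ := Nat.floor_le (by positivity)
    exact le_trans (by exact_mod_cast h1) h2
  have : ((inst τ ∩ Set.Ico 0 t).ncard : ℝ) ≤ 1 + ((K * K : ℕ) : ℝ) := by
    exact_mod_cast le_trans hcard hFcard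
  linarith

lemma count_lower {τ : ℝ} (hτ : 0 < τ) {k : ℕ} (hk : 1 ≤ k) :
    k ≤ (inst τ ∩ Set.Ico ((k:ℝ)^2 * τ) ((k:ℝ)^2 * τ + τ)).ncard := by
  have hk' : (0:ℝ) < k := by exact_mod_cast hk
  have hinj : Set.InjOn (pt τ k) ↑(Finset.range k) := by
    intro i _ j _ h
    unfold pt at h
    have hpos : (0:ℝ) < τ / k := div_pos hτ hk'
    have : (i:ℝ) * (τ / k) = (j:ℝ) * (τ / k) := by linarith
    have := mul_right_cancel₀ (ne_of_gt hpos) this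
    exact_mod_cast this
  have hsub : pt τ k '' ↑(Finset.range k)
      ⊆ inst τ ∩ Set.Ico ((k:ℝ)^2 * τ) ((k:ℝ)^2 * τ + τ) := by
    rintro x ⟨j, hj, rfl⟩
    simp only [Finset.coe_range, Set.mem_Iio] at hj
    exact ⟨Or.inr ⟨k, j, hk, hj, rfl⟩, pt_lower hτ hk j, pt_upper hτ hk hj⟩
  calc k = ((Finset.range k : Set ℕ)).ncard := by
        rw [Set.ncard_coe_finset, Finset.card_range]
    _ = (pt τ k '' ↑(Finset.range k)).ncard := (Set.ncard_image_of_injOn hinj).symm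
    _ ≤ _ := Set.ncard_le_ncard hsub
        ((inst_finite_le hτ ((k:ℝ)^2 * τ + τ)).subset
          (by rintro x ⟨hx, -, hx2⟩; exact ⟨hx, le_of_lt hx2⟩))

end AdwAux

/-- `S∞_adw(τ) ⊆ S̄(τ)`, and the inclusion is strict. -/
theorem adwInf_subset_sbar_strict {I : Type*} [Nontrivial I] (τ : ℝ) (hτ : 0 < τ) :
    (∀ σ : SwitchingSignal I, SadwInf τ σ → Sbar τ σ) ∧
    (∃ σ : SwitchingSignal I, Sbar τ σ ∧ ¬ SadwInf τ σ) := by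
  constructor
  · rintro σ ⟨N₀, hN⟩
    refine ⟨N₀, ?_⟩
    filter_upwards [Filter.eventually_ge_atTop (0:ℝ)] with t ht
    have h := hN 0 t le_rfl ht
    rw [sub_zero] at h
    linarith
  · obtain ⟨a, b, hab⟩ := exists_pair_ne I
    refine ⟨AdwAux.sig τ hτ a b hab, ⟨1, ?_⟩, ?_⟩
    · filter_upwards [Filter.eventually_ge_atTop (0:ℝ)] with t ht
      have h := AdwAux.count_upper hτ ht
      have heq : Nsw (AdwAux.sig τ hτ a b hab) 0 t = (AdwAux.inst τ ∩ Set.Ico 0 t).ncard :=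
        rfl
      rw [heq]
      linarith
    · rintro ⟨N₀, hN⟩
      set k : ℕ := N₀ + 2 with hkdef
      have hk : 1 ≤ k := by omega
      have hlow := AdwAux.count_lower hτ hk
      have hs0 : (0:ℝ) ≤ (k:ℝ)^2 * τ := by positivity
      have hst : (k:ℝ)^2 * τ ≤ (k:ℝ)^2 * τ + τ := by linarith
      have hup := hN ((k:ℝ)^2 * τ) ((k:ℝ)^2 * τ + τ) hs0 hst
      have heq : Nsw (AdwAux.sig τ hτ a b hab) ((k:ℝ)^2 * τ) ((k:ℝ)^2 * τ + τ)
          = (AdwAux.inst τ ∩ Set.Ico ((k:ℝ)^2 * τ) ((k:ℝ)^2 * τ + τ)).ncard := rfl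
      rw [heq] at hup
      have hdiv : ((k:ℝ)^2 * τ + τ - (k:ℝ)^2 * τ) / τ = 1 := by
        field_simp
        ring
      rw [hdiv] at hup
      have hlow' : (k : ℝ) ≤ ((AdwAux.inst τ ∩
          Set.Ico ((k:ℝ)^2 * τ) ((k:ℝ)^2 * τ + τ)).ncard : ℝ) := by exact_mod_cast hlow
      have hkR : (k : ℝ) = (N₀ : ℝ) + 2 := by push_cast [hkdef]; ring
      linarith
end

section
/- Let τ > 0 and let σ ∈ S be periodic of period T > 0 (σ(t+T) = σ(t) for all t ≥ 0) with lim_{t→T⁻} σ(t) ≠ σ(0). Then the following are equivalent: (i) σ ∈ S̄(τ); (ii) N_σ(0,T) ≤ T/τ; (iii) σ ∈ S_adw(τ, N_σ(0,T)). -/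
section Aux
variable {I : Type*} (σ : SwitchingSignal I)

lemma Nsw_finite (s t : ℝ) : (σ.instants ∩ Set.Ico s t).Finite :=
  (σ.finite_le t).subset (fun x hx => ⟨hx.1, le_of_lt hx.2.2⟩)

lemma Nsw_mono {s t t' : ℝ} (h : t ≤ t') : Nsw σ s t ≤ Nsw σ s t' :=
  Set.ncard_le_ncard (Set.inter_subset_inter_right _ (Set.Ico_subset_Ico_right h))
    (Nsw_finite σ s t')

lemma Nsw_add {s t u : ℝ} (hst : s ≤ t) (htu : t ≤ u) :
    Nsw σ s u = Nsw σ s t + Nsw σ t u := by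
  unfold Nsw
  rw [← Set.ncard_union_eq ?disj (Nsw_finite σ s t) (Nsw_finite σ t u)]
  · congr 1
    rw [← Set.inter_union_distrib_left, Set.Ico_union_Ico_eq_Ico hst htu]
  case disj =>
    rw [Set.disjoint_left]
    rintro x ⟨-, -, h2⟩ ⟨-, h3, -⟩
    exact absurd h3 (not_le.mpr h2)

lemma exists_prev {t : ℝ} (ht : 0 < t) :
    ∃ s, s ∈ σ.instants ∧ 0 ≤ s ∧ s < t ∧ σ.instants ∩ Set.Ioo s t = ∅ := by
  have hF : (σ.instants ∩ Set.Iio t).Finite :=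
    (σ.finite_le t).subset (fun x hx => Set.mem_inter hx.1 (Set.mem_Iic.mpr (Set.mem_Iio.mp hx.2).le))
  have hne : (σ.instants ∩ Set.Iio t).Nonempty := ⟨0, σ.zero_mem, ht⟩
  obtain ⟨a, ha, hmax⟩ := hF.exists_maximalFor id _ hne
  refine ⟨a, ha.1, σ.nonneg a ha.1, ha.2, ?_⟩
  rw [Set.eq_empty_iff_forall_notMem]
  rintro x ⟨hx1, hx2, hx3⟩
  exact absurd (hmax (show x ∈ σ.instants ∩ Set.Iio t from ⟨hx1, hx3⟩) (le_of_lt hx2)) (not_le.mpr hx2)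

/-- If `t > 0` is not an instant, the signal is constant on an interval `[s₀, t]`. -/
lemma exists_prev_closed {t : ℝ} (ht : 0 < t) (hni : t ∉ σ.instants) :
    ∃ s₀, s₀ ∈ σ.instants ∧ 0 ≤ s₀ ∧ s₀ < t ∧ σ.instants ∩ Set.Ioc s₀ t = ∅ := by
  obtain ⟨s₀, h1, h2, h3, h4⟩ := exists_prev σ ht
  refine ⟨s₀, h1, h2, h3, ?_⟩
  rw [Set.eq_empty_iff_forall_notMem]
  rintro x ⟨hx1, hx2, hx3⟩
  rcases lt_or_eq_of_le hx3 with h | h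
  · exact (Set.eq_empty_iff_forall_notMem.mp h4) x ⟨hx1, hx2, h⟩
  · exact hni (h ▸ hx1)
end Aux

section Aux2
variable {I : Type*} (σ : SwitchingSignal I)

lemma const_of {s₀ t s : ℝ} (h0 : 0 ≤ s₀) (hst : s₀ ≤ s) (hs : s ≤ t)
    (hemp : σ.instants ∩ Set.Ioc s₀ t = ∅) : σ.toFun s = σ.toFun t := by
  refine σ.const_between s t (h0.trans hst) hs ?_
  rw [Set.eq_empty_iff_forall_notMem] at hemp ⊢
  rintro x ⟨hx1, hx2, hx3⟩
  exact hemp x ⟨hx1, lt_of_le_of_lt hst hx2, hx3⟩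

lemma jump_left {t : ℝ} (hti : t ∈ σ.instants) (ht : 0 < t) :
    ∃ s', 0 ≤ s' ∧ s' < t ∧ ∀ s'', s' ≤ s'' → s'' < t → σ.toFun s'' ≠ σ.toFun t := by
  obtain ⟨s', h1, h2, h3, h4⟩ := exists_prev σ ht
  refine ⟨s', h2, h3, fun s'' hs1 hs2 => ?_⟩
  have hconst : σ.toFun s' = σ.toFun s'' := by
    refine σ.const_between s' s'' h2 hs1 ?_
    rw [Set.eq_empty_iff_forall_notMem] at h4 ⊢
    rintro x ⟨hx1, hx2, hx3⟩
    exact h4 x ⟨hx1, hx2, lt_of_le_of_lt hx3 hs2⟩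
  rw [← hconst]
  exact σ.jump t hti ht s' h2 h3 h4

variable {T : ℝ} (hT : 0 < T) (hper : ∀ t : ℝ, 0 ≤ t → σ.toFun (t + T) = σ.toFun t)

include hT hper

lemma T_mem (hleft : ∀ᶠ r in nhdsWithin T (Set.Iio T), σ.toFun r ≠ σ.toFun 0) :
    T ∈ σ.instants := by
  by_contra h
  obtain ⟨s₀, hi, h0, hlt, hemp⟩ := exists_prev_closed σ hT h
  have hmem : ∀ᶠ r in nhdsWithin T (Set.Iio T), r ∈ Set.Ioo s₀ T := by
    filter_upwards [eventually_mem_nhdsWithin,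
      (isOpen_Ioi.eventually_mem (Set.mem_Ioi.mpr hlt)).filter_mono nhdsWithin_le_nhds]
      with r h1 h2
    exact ⟨h2, h1⟩
  obtain ⟨r, hr1, hr2⟩ := (hleft.and hmem).exists
  have : σ.toFun r = σ.toFun T := const_of σ h0 hr2.1.le hr2.2.le hemp
  have hT0 : σ.toFun T = σ.toFun 0 := by
    have := hper 0 le_rfl; rwa [zero_add] at this
  exact hr1 (this.trans hT0)

lemma shift_up (hTmem : T ∈ σ.instants) {t : ℝ} (hti : t ∈ σ.instants) :
    t + T ∈ σ.instants := by
  have ht0 : 0 ≤ t := σ.nonneg t hti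
  rcases eq_or_lt_of_le ht0 with h | ht
  · rwa [← h, zero_add]
  by_contra h
  have hu : 0 < t + T := by linarith
  obtain ⟨s₀, hi, h0, hlt, hemp⟩ := exists_prev_closed σ hu h
  obtain ⟨s', hs0, hslt, hjump⟩ := jump_left σ hti ht
  set s := max s₀ (s' + T) with hs
  have hsu : s < t + T := max_lt hlt (by linarith)
  have h1 : σ.toFun s = σ.toFun (t + T) := const_of σ h0 (le_max_left _ _) hsu.le hemp
  have hsT : s' ≤ s - T := by
    have := le_max_right s₀ (s' + T); linarith
  have h2 : σ.toFun ((s - T) + T) = σ.toFun (s - T) := hper _ (by linarith)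
  rw [sub_add_cancel] at h2
  have h3 : σ.toFun (t + T) = σ.toFun t := hper t ht0
  exact hjump (s - T) hsT (by linarith) (by rw [h2.symm, h1, h3])

lemma shift_down {u : ℝ} (hu : u ∈ σ.instants) (hTu : T ≤ u) :
    u - T ∈ σ.instants := by
  rcases eq_or_lt_of_le hTu with h | hTu
  · rw [← h, sub_self]; exact σ.zero_mem
  by_contra h
  have ht : 0 < u - T := by linarith
  obtain ⟨s₀, hi, h0, hlt, hemp⟩ := exists_prev_closed σ ht h
  obtain ⟨s', hs0, hslt, hjump⟩ := jump_left σ hu (lt_trans hT hTu)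
  set s := max s₀ (s' - T) with hs
  have hst : s < u - T := max_lt hlt (by linarith)
  have h1 : σ.toFun s = σ.toFun (u - T) := const_of σ h0 (le_max_left _ _) hst.le hemp
  have h2 : σ.toFun (s + T) = σ.toFun s := hper s (le_trans h0 (le_max_left _ _))
  have h3 : σ.toFun ((u - T) + T) = σ.toFun (u - T) := hper _ ht.le
  rw [sub_add_cancel] at h3
  have hss : s' ≤ s + T := by
    have := le_max_right s₀ (s' - T); linarith
  exact hjump (s + T) hss (by linarith) (by rw [h2, h1, ← h3])

end Aux2

section Aux3
variable {I : Type*} (σ : SwitchingSignal I) {T : ℝ} (hT : 0 < T)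
variable (hshift_up : ∀ t ∈ σ.instants, t + T ∈ σ.instants)
variable (hshift_down : ∀ u ∈ σ.instants, T ≤ u → u - T ∈ σ.instants)

include hT hshift_up hshift_down

lemma Nsw_shift {a b : ℝ} (ha : 0 ≤ a) :
    Nsw σ (a + T) (b + T) = Nsw σ a b := by
  unfold Nsw
  have himg : (fun x => x + T) '' (σ.instants ∩ Set.Ico a b)
      = σ.instants ∩ Set.Ico (a + T) (b + T) := by
    ext x
    constructor
    · rintro ⟨y, ⟨hy1, hy2, hy3⟩, rfl⟩
      exact ⟨hshift_up y hy1, show a + T ≤ y + T by linarith, show y + T < b + T by linarith⟩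
    · rintro ⟨hx1, hx2, hx3⟩
      exact ⟨x - T, ⟨hshift_down x hx1 (by linarith), by linarith, by linarith⟩, by ring⟩
  rw [← himg, Set.ncard_image_of_injective _ (add_left_injective T)]

lemma Nsw_period_aux : ∀ k : ℕ, ∀ a : ℝ, 0 ≤ a → a ≤ k * T + T →
    Nsw σ a (a + T) = Nsw σ 0 T := by
  intro k
  induction k with
  | zero =>
    intro a ha haT
    simp only [Nat.cast_zero, zero_mul, zero_add] at haT
    have h1 : Nsw σ a (a + T) = Nsw σ a T + Nsw σ T (a + T) :=
      Nsw_add σ haT (by linarith)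
    have h2 : Nsw σ T (a + T) = Nsw σ 0 a := by
      have := Nsw_shift σ hT hshift_up hshift_down (a := 0) (b := a) le_rfl
      rwa [zero_add] at this
    have h3 : Nsw σ 0 T = Nsw σ 0 a + Nsw σ a T := Nsw_add σ ha haT
    omega
  | succ k ih =>
    intro a ha haT
    by_cases hle : a ≤ k * T + T
    · exact ih a ha hle
    push_neg at hle
    have haT' : T ≤ a := by nlinarith [Nat.cast_nonneg (α := ℝ) k]
    have h1 : Nsw σ a (a + T) = Nsw σ (a - T) a := by
      have := Nsw_shift σ hT hshift_up hshift_down (a := a - T) (b := a) (by linarith)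
      rw [sub_add_cancel] at this
      exact this
    have h2 : Nsw σ (a - T) a = Nsw σ 0 T := by
      have := ih (a - T) (by linarith) (by push_cast at haT ⊢; linarith)
      rwa [sub_add_cancel] at this
    rw [h1, h2]

lemma Nsw_period {a : ℝ} (ha : 0 ≤ a) : Nsw σ a (a + T) = Nsw σ 0 T := by
  refine Nsw_period_aux σ hT hshift_up hshift_down ⌈a / T⌉₊ a ha ?_
  have h1 : a / T ≤ (⌈a / T⌉₊ : ℝ) := Nat.le_ceil _
  have := (div_le_iff₀ hT).mp h1
  linarith

lemma Nsw_mul {s : ℝ} (hs : 0 ≤ s) (k : ℕ) :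
    Nsw σ s (s + k * T) = k * Nsw σ 0 T := by
  induction k with
  | zero => simp [Nsw]
  | succ k ih =>
    have hk : (0:ℝ) ≤ k * T := by positivity
    have h1 : Nsw σ s (s + (k + 1 : ℕ) * T)
        = Nsw σ s (s + k * T) + Nsw σ (s + k * T) ((s + k * T) + T) := by
      have := Nsw_add σ (s := s) (t := s + k * T) (u := (s + k * T) + T)
        (by linarith) (by linarith)
      rw [← this]
      congr 1
      push_cast
      ring
    rw [h1, ih, Nsw_period σ hT hshift_up hshift_down (by linarith)]
    ring

lemma Nsw_le_bound {s t : ℝ} (hs : 0 ≤ s) (hst : s ≤ t) :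
    Nsw σ s t ≤ (⌊(t - s) / T⌋₊ + 1) * Nsw σ 0 T := by
  set k := ⌊(t - s) / T⌋₊ with hk
  have h1 : (t - s) / T < k + 1 := Nat.lt_floor_add_one _
  have h2 : t ≤ s + (k + 1 : ℕ) * T := by
    have := (div_lt_iff₀ hT).mp h1
    push_cast
    linarith
  calc Nsw σ s t ≤ Nsw σ s (s + (k + 1 : ℕ) * T) := Nsw_mono σ h2
    _ = (k + 1) * Nsw σ 0 T := Nsw_mul σ hT hshift_up hshift_down hs (k + 1)

end Aux3

/-- For a periodic signal `σ` of period `T` whose left limit at `T` differs from `σ(0)`: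
`σ ∈ S̄(τ)` iff `N_σ(0,T) ≤ T/τ` iff `σ ∈ S_adw(τ, N_σ(0,T))`. -/
theorem periodic_sbar_iff {I : Type*} (τ T : ℝ) (hτ : 0 < τ) (hT : 0 < T)
    (σ : SwitchingSignal I)
    (hper : ∀ t : ℝ, 0 ≤ t → σ.toFun (t + T) = σ.toFun t)
    (hleft : ∀ᶠ r in nhdsWithin T (Set.Iio T), σ.toFun r ≠ σ.toFun 0) :
    (Sbar τ σ ↔ (Nsw σ 0 T : ℝ) ≤ T / τ) ∧
    (Sbar τ σ ↔ Sadw τ (Nsw σ 0 T) σ) := by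
  have hTmem : T ∈ σ.instants := T_mem σ hT hper hleft
  have hup : ∀ t ∈ σ.instants, t + T ∈ σ.instants :=
    fun t ht => shift_up σ hT hper hTmem ht
  have hdown : ∀ u ∈ σ.instants, T ≤ u → u - T ∈ σ.instants :=
    fun u hu hTu => shift_down σ hT hper hu hTu
  set n := Nsw σ 0 T with hn
  have h23 : (n : ℝ) ≤ T / τ → Sadw τ n σ := by
    intro hle s t hs hst
    have hb := Nsw_le_bound σ hT hup hdown hs hst
    set k := ⌊(t - s) / T⌋₊ with hk
    have hkT : (k : ℝ) * T ≤ t - s := by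
      have h0 : 0 ≤ (t - s) / T := div_nonneg (by linarith) hT.le
      have h1 : (k : ℝ) ≤ (t - s) / T := Nat.floor_le h0
      calc (k : ℝ) * T ≤ ((t - s) / T) * T := by
            exact mul_le_mul_of_nonneg_right h1 hT.le
        _ = t - s := by field_simp
    calc (Nsw σ s t : ℝ) ≤ (((k + 1) * n : ℕ) : ℝ) := by exact_mod_cast hb
      _ = (n : ℝ) + (k : ℝ) * (n : ℝ) := by push_cast; ring
      _ ≤ (n : ℝ) + (k : ℝ) * (T / τ) := by
          have := mul_le_mul_of_nonneg_left hle (Nat.cast_nonneg (α := ℝ) k)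
          linarith
      _ = (n : ℝ) + ((k : ℝ) * T) / τ := by ring
      _ ≤ (n : ℝ) + (t - s) / τ := by gcongr
  have h31 : Sadw τ n σ → Sbar τ σ := by
    intro h
    refine ⟨(n : ℝ), ?_⟩
    filter_upwards [Filter.eventually_ge_atTop (0 : ℝ)] with t ht
    have := h 0 t le_rfl ht
    rw [sub_zero] at this
    linarith
  have h12 : Sbar τ σ → (n : ℝ) ≤ T / τ := by
    rintro ⟨C, hC⟩
    by_contra hgt
    push_neg at hgt
    rw [Filter.eventually_atTop] at hC
    obtain ⟨M, hM⟩ := hC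
    set δ := (n : ℝ) - T / τ with hδdef
    have hδ : 0 < δ := by simp only [hδdef]; linarith
    obtain ⟨k, hkgt⟩ := exists_nat_gt (max (M / T) (C / δ))
    have hk1 : M / T < (k : ℝ) := lt_of_le_of_lt (le_max_left _ _) hkgt
    have hk2 : C / δ < (k : ℝ) := lt_of_le_of_lt (le_max_right _ _) hkgt
    have hcount : Nsw σ 0 ((k : ℝ) * T) = k * n := by
      have := Nsw_mul σ hT hup hdown (s := 0) le_rfl k
      rwa [zero_add] at this
    have h1 := hM ((k : ℝ) * T) (le_of_lt ((div_lt_iff₀ hT).mp hk1))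
    rw [hcount] at h1
    push_cast at h1
    have h2 : C < (k : ℝ) * δ := (div_lt_iff₀ hδ).mp hk2
    have h3 : (k : ℝ) * δ = (k : ℝ) * (n : ℝ) - (k : ℝ) * T / τ := by
      simp only [hδdef]; ring
    rw [h3] at h2
    linarith
  exact ⟨⟨h12, fun h => h31 (h23 h)⟩, ⟨fun h => h23 (h12 h), h31⟩⟩
end

section
/- Let τ > 0, N₁, N₂ ∈ ℕ and δ > 0. If σ₁ ∈ S_adw(τ, N₁) and σ₂ ∈ S_adw(τ, N₂), then σ₁ ⋄_δ σ₂ ∈ S_adw(τ, N₁ + N₂). In particular S∞_adw(τ) is closed under concatenation. -/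
lemma SwitchingSignal.inter_Ico_finite {I : Type*} (σ : SwitchingSignal I) (s t : ℝ) :
    (σ.instants ∩ Set.Ico s t).Finite :=
  (σ.finite_le t).subset (fun x hx => ⟨hx.1, hx.2.2.le⟩)

lemma SwitchingSignal.exists_pred {I : Type*} (σ : SwitchingSignal I) (u : ℝ) (hu0 : 0 < u) :
    ∃ p ∈ σ.instants, p < u ∧ σ.instants ∩ Set.Ioo p u = ∅ := by
  have hF : (σ.instants ∩ Set.Iio u).Finite :=
    (σ.finite_le u).subset (fun x hx => ⟨hx.1, Set.mem_Iic.mpr (le_of_lt (Set.mem_Iio.mp hx.2))⟩)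
  have hne : (σ.instants ∩ Set.Iio u).Nonempty := ⟨0, σ.zero_mem, hu0⟩
  obtain ⟨p, hp, hmax⟩ : ∃ p ∈ σ.instants ∩ Set.Iio u, ∀ x ∈ σ.instants ∩ Set.Iio u, p ≤ x → p = x := by
    obtain ⟨p, hp⟩ := hF.exists_maximal hne
    exact ⟨p, hp.1, fun x hx h => le_antisymm h (hp.2 hx h)⟩
  refine ⟨p, hp.1, hp.2, ?_⟩
  rw [Set.eq_empty_iff_forall_notMem]
  rintro x ⟨hx, hpx, hxu⟩
  exact (ne_of_lt hpx) (hmax x ⟨hx, hxu⟩ hpx.le)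

lemma SwitchingSignal.mem_instants_of_jump {I : Type*} (σ : SwitchingSignal I)
    (r₀ r₁ : ℝ) (h0 : 0 ≤ r₀) (h01 : r₀ < r₁) (c : I)
    (hc : ∀ w, r₀ ≤ w → w < r₁ → σ.toFun w = c) (hne : σ.toFun r₁ ≠ c) :
    r₁ ∈ σ.instants := by
  by_contra hmem
  have hne1 : σ.instants ∩ Set.Ioc r₀ r₁ ≠ ∅ := by
    intro h'
    exact hne ((σ.const_between r₀ r₁ h0 h01.le h').symm.trans (hc r₀ le_rfl h01))
  have hne2 : (σ.instants ∩ Set.Ioo r₀ r₁).Nonempty := by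
    rcases Set.nonempty_iff_ne_empty.2 hne1 with ⟨x, hx, hx2⟩
    exact ⟨x, hx, hx2.1, lt_of_le_of_ne hx2.2 (fun h => hmem (h ▸ hx))⟩
  have hF : (σ.instants ∩ Set.Ioo r₀ r₁).Finite :=
    (σ.finite_le r₁).subset (fun x hx => ⟨hx.1, hx.2.2.le⟩)
  obtain ⟨q, hq, hmax⟩ : ∃ q ∈ σ.instants ∩ Set.Ioo r₀ r₁, ∀ x ∈ σ.instants ∩ Set.Ioo r₀ r₁, q ≤ x → q = x := by
    obtain ⟨q, hq⟩ := hF.exists_maximal hne2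
    exact ⟨q, hq.1, fun x hx h => le_antisymm h (hq.2 hx h)⟩
  have hq0 : 0 ≤ q := σ.nonneg q hq.1
  have hconst : σ.instants ∩ Set.Ioc q r₁ = ∅ := by
    rw [Set.eq_empty_iff_forall_notMem]
    rintro x ⟨hx, hqx, hxr⟩
    rcases lt_or_eq_of_le hxr with hlt | rfl
    · exact (ne_of_lt hqx) (hmax x ⟨hx, lt_trans hq.2.1 hqx, hlt⟩ hqx.le)
    · exact hmem hx
  have h4 := σ.const_between q r₁ hq0 hq.2.2.le hconst
  exact hne (h4 ▸ hc q (le_of_lt hq.2.1) hq.2.2)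

/-- Every positive instant of the concatenation below `δ` is an instant of `σ₁`. -/
lemma concat_mem_left {I : Type*} (δ : ℝ) (σ₁ η : SwitchingSignal I)
    (hcat₁ : ∀ t : ℝ, 0 ≤ t → t < δ → η.toFun t = σ₁.toFun t)
    (u : ℝ) (hu : u ∈ η.instants) (hu0 : 0 < u) (hud : u < δ) :
    u ∈ σ₁.instants := by
  obtain ⟨p, hp, hpu, hgap⟩ := η.exists_pred u hu0
  have hp0 : 0 ≤ p := η.nonneg p hp
  have hjump := η.jump u hu hu0 p hp0 hpu hgap
  apply σ₁.mem_instants_of_jump p u hp0 hpu (η.toFun p)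
  · intro w hpw hwu
    have hcst : η.instants ∩ Set.Ioc p w = ∅ := by
      rw [Set.eq_empty_iff_forall_notMem]
      rintro x ⟨hx, hx1, hx2⟩
      have : x ∈ η.instants ∩ Set.Ioo p u := ⟨hx, hx1, lt_of_le_of_lt hx2 hwu⟩
      rw [hgap] at this; exact this
    have h5 := η.const_between p w hp0 hpw hcst
    rw [← hcat₁ w (le_trans hp0 hpw) (lt_trans hwu hud), ← h5]
  · rw [← hcat₁ u hu0.le hud]
    exact fun h => hjump h.symm

/-- Every instant `≥ δ` of the concatenation shifts to an instant of `σ₂`. -/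
lemma concat_mem_right {I : Type*} (δ : ℝ) (hδ : 0 < δ) (σ₂ η : SwitchingSignal I)
    (hcat₂ : ∀ t : ℝ, δ ≤ t → η.toFun t = σ₂.toFun (t - δ))
    (u : ℝ) (hu : u ∈ η.instants) (hud : δ ≤ u) :
    u - δ ∈ σ₂.instants := by
  rcases eq_or_lt_of_le hud with rfl | hlt
  · simpa using σ₂.zero_mem
  have hu0 : 0 < u := lt_trans hδ hlt
  obtain ⟨p, hp, hpu, hgap⟩ := η.exists_pred u hu0
  have hp0 : 0 ≤ p := η.nonneg p hp
  have hjump := η.jump u hu hu0 p hp0 hpu hgap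
  have hconstη : ∀ v, p ≤ v → v < u → η.toFun v = η.toFun p := by
    intro v hpv hvu
    have hcst : η.instants ∩ Set.Ioc p v = ∅ := by
      rw [Set.eq_empty_iff_forall_notMem]
      rintro x ⟨hx, hx1, hx2⟩
      have : x ∈ η.instants ∩ Set.Ioo p u := ⟨hx, hx1, lt_of_le_of_lt hx2 hvu⟩
      rw [hgap] at this; exact this
    exact (η.const_between p v hp0 hpv hcst).symm
  apply σ₂.mem_instants_of_jump (max (p - δ) 0) (u - δ) (le_max_right _ _)
      (max_lt (by linarith) (by linarith)) (η.toFun p)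
  · intro w hw1 hw2
    have hw0 : 0 ≤ w := le_trans (le_max_right _ _) hw1
    have hpw : p ≤ w + δ := by
      have := le_trans (le_max_left _ _) hw1; linarith
    have hδw : δ ≤ w + δ := by linarith
    have hwu : w + δ < u := by linarith
    have h6 : η.toFun (w + δ) = σ₂.toFun w := by
      have := hcat₂ (w + δ) hδw
      simpa using this
    rw [← h6]
    exact hconstη _ hpw hwu
  · rw [← hcat₂ u hud]
    exact fun h => hjump h.symm

/-- The concatenation of a `(τ,N₁)` and a `(τ,N₂)` average dwell-time signal is a
`(τ, N₁+N₂)` average dwell-time signal; in particular `S∞_adw(τ)` is closed under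
concatenation. -/
theorem sadw_concat {I : Type*} (τ : ℝ) (hτ : 0 < τ) (N₁ N₂ : ℕ) (δ : ℝ) (hδ : 0 < δ)
    (σ₁ σ₂ η : SwitchingSignal I)
    (hcat₁ : ∀ t : ℝ, 0 ≤ t → t < δ → η.toFun t = σ₁.toFun t)
    (hcat₂ : ∀ t : ℝ, δ ≤ t → η.toFun t = σ₂.toFun (t - δ))
    (h₁ : Sadw τ N₁ σ₁) (h₂ : Sadw τ N₂ σ₂) :
    Sadw τ (N₁ + N₂) η ∧ SadwInf τ η := by
  have key : Sadw τ (N₁ + N₂) η := by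
    · intro s t hs hst
      by_cases hcase1 : t ≤ δ
      · -- whole interval lies left of δ
        have hsub : η.instants ∩ Set.Ico s t ⊆ σ₁.instants ∩ Set.Ico s t := by
          rintro u ⟨hu, hsu, hut⟩
          rcases eq_or_lt_of_le (η.nonneg u hu) with h0 | h0
          · exact ⟨h0 ▸ σ₁.zero_mem, hsu, hut⟩
          · exact ⟨concat_mem_left δ σ₁ η hcat₁ u hu h0 (lt_of_lt_of_le hut hcase1),
              hsu, hut⟩
        have hNle : Nsw η s t ≤ Nsw σ₁ s t :=
          Set.ncard_le_ncard hsub (σ₁.inter_Ico_finite s t)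
        have hb := h₁ s t hs hst
        have : (Nsw η s t : ℝ) ≤ (N₁ : ℝ) + (t - s) / τ :=
          le_trans (by exact_mod_cast hNle) hb
        push_cast
        push_cast at this
        linarith
      by_cases hcase2 : δ ≤ s
      · -- whole interval lies right of δ
        have hsub : η.instants ∩ Set.Ico s t ⊆
            (fun w => w + δ) '' (σ₂.instants ∩ Set.Ico (s - δ) (t - δ)) := by
          rintro u ⟨hu, hsu, hut⟩
          exact ⟨u - δ, ⟨concat_mem_right δ hδ σ₂ η hcat₂ u hu (le_trans hcase2 hsu),
            by constructor <;> linarith⟩, by ring⟩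
        have hfin : ((fun w => w + δ) '' (σ₂.instants ∩ Set.Ico (s - δ) (t - δ))).Finite :=
          (σ₂.inter_Ico_finite _ _).image _
        have hNle : Nsw η s t ≤ Nsw σ₂ (s - δ) (t - δ) := by
          have h7 := Set.ncard_le_ncard hsub hfin
          rwa [Set.ncard_image_of_injective _ (add_left_injective δ)] at h7
        have hb := h₂ (s - δ) (t - δ) (by linarith) (by linarith)
        have h8 : (Nsw η s t : ℝ) ≤ (N₂ : ℝ) + ((t - δ) - (s - δ)) / τ :=
          le_trans (by exact_mod_cast hNle) hb
        have h9 : ((t - δ) - (s - δ)) = t - s := by ring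
        rw [h9] at h8
        push_cast
        push_cast at h8
        linarith
      · -- interval straddles δ
        push_neg at hcase1 hcase2
        have hsub : η.instants ∩ Set.Ico s t ⊆
            (σ₁.instants ∩ Set.Ico s δ) ∪
              ((fun w => w + δ) '' (σ₂.instants ∩ Set.Ico 0 (t - δ))) := by
          rintro u ⟨hu, hsu, hut⟩
          by_cases hud : u < δ
          · left
            rcases eq_or_lt_of_le (η.nonneg u hu) with h0 | h0
            · exact ⟨h0 ▸ σ₁.zero_mem, hsu, hud⟩
            · exact ⟨concat_mem_left δ σ₁ η hcat₁ u hu h0 hud, hsu, hud⟩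
          · right
            push_neg at hud
            exact ⟨u - δ, ⟨concat_mem_right δ hδ σ₂ η hcat₂ u hu hud,
              by constructor <;> linarith⟩, by ring⟩
        have hfin2 : ((fun w => w + δ) '' (σ₂.instants ∩ Set.Ico 0 (t - δ))).Finite :=
          (σ₂.inter_Ico_finite _ _).image _
        have hNle : Nsw η s t ≤ Nsw σ₁ s δ + Nsw σ₂ 0 (t - δ) := by
          have h7 := Set.ncard_le_ncard hsub ((σ₁.inter_Ico_finite s δ).union hfin2)
          have h8 := Set.ncard_union_le (σ₁.instants ∩ Set.Ico s δ)
            ((fun w => w + δ) '' (σ₂.instants ∩ Set.Ico 0 (t - δ)))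
          rw [Set.ncard_image_of_injective _ (add_left_injective δ)] at h8
          exact le_trans h7 h8
        have hb1 := h₁ s δ hs (le_of_lt hcase2)
        have hb2 := h₂ 0 (t - δ) le_rfl (by linarith)
        have h10 : (Nsw η s t : ℝ) ≤ ((Nsw σ₁ s δ : ℕ) : ℝ) + ((Nsw σ₂ 0 (t - δ) : ℕ) : ℝ) := by
          exact_mod_cast hNle
        have h11 : (δ - s) / τ + (t - δ - 0) / τ = (t - s) / τ := by
          rw [← add_div]; congr 1; ring
        push_cast
        push_cast at hb1 hb2 h10
        linarith
  exact ⟨key, N₁ + N₂, key⟩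
end

section
/- Let {f_i}_{i∈I} be well-posed and let τ > 0. The switched system ẋ = f_{σ(t)}(x) is UGAS w.r.t. S∞_adw(τ) if and only if it is UGAS w.r.t. the class S of all switching signals. Similarly, for every ρ > 0, it is UGES_ρ w.r.t. S∞_adw(τ) if and only if it is UGES_ρ w.r.t. S. -/
open Set Filter Topology

private lemma contOn_union_closed {E : Type*} [TopologicalSpace E] {g : ℝ → E} {s t : Set ℝ}
    (hs : IsClosed s) (ht : IsClosed t)
    (hgs : ContinuousOn g s) (hgt : ContinuousOn g t) : ContinuousOn g (s ∪ t) := by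
  intro x hx
  have key : ∀ (u : Set ℝ), IsClosed u → ContinuousOn g u → ContinuousWithinAt g u x := by
    intro u hu hgu
    by_cases h : x ∈ u
    · exact hgu x h
    · have hb : 𝓝[u] x = ⊥ := by
        rw [← not_neBot, ← mem_closure_iff_nhdsWithin_neBot, hu.closure_eq]
        exact h
      unfold ContinuousWithinAt
      rw [hb]
      exact tendsto_bot
  exact (key s hs hgs).union (key t ht hgt)

noncomputable def truncSignal {I : Type*} (σ : SwitchingSignal I) (t : ℝ) (ht : 0 ≤ t) :
    SwitchingSignal I where
  toFun s := σ.toFun (min s t)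
  instants := σ.instants ∩ Set.Iic t
  zero_mem := ⟨σ.zero_mem, ht⟩
  nonneg := fun a ha => σ.nonneg a ha.1
  finite_le := fun _ => (σ.finite_le t).subset fun a ha => ⟨ha.1.1, ha.1.2⟩
  const_between := by
    intro s u hs hsu hempty
    rcases le_or_gt u t with hut | htu
    · simp only [min_eq_left (hsu.trans hut), min_eq_left hut]
      apply σ.const_between s u hs hsu
      rw [Set.eq_empty_iff_forall_notMem] at hempty ⊢
      intro a ha
      exact hempty a ⟨⟨ha.1, ha.2.2.trans hut⟩, ha.2⟩
    · rcases le_or_gt t s with hts | hst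
      · simp only [min_eq_right hts, min_eq_right htu.le]
      · simp only [min_eq_left hst.le, min_eq_right htu.le]
        apply σ.const_between s t hs hst.le
        rw [Set.eq_empty_iff_forall_notMem] at hempty ⊢
        intro a ha
        exact hempty a ⟨⟨ha.1, ha.2.2⟩, ha.2.1, ha.2.2.trans htu.le⟩
  jump := by
    intro u hu hu0 s hs hsu hempty
    have hut : u ≤ t := Set.mem_Iic.1 hu.2
    simp only [min_eq_left (hsu.le.trans hut), min_eq_left hut]
    apply σ.jump u hu.1 hu0 s hs hsu
    rw [Set.eq_empty_iff_forall_notMem] at hempty ⊢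
    intro a ha
    exact hempty a ⟨⟨ha.1, ha.2.2.le.trans hut⟩, ha.2⟩

lemma truncSignal_adw {I : Type*} (σ : SwitchingSignal I) (t τ : ℝ) (ht : 0 ≤ t) (hτ : 0 < τ) :
    SadwInf τ (truncSignal σ t ht) := by
  refine ⟨(σ.instants ∩ Set.Iic t).ncard, fun s u hs hsu => ?_⟩
  have h1 : Nsw (truncSignal σ t ht) s u ≤ (σ.instants ∩ Set.Iic t).ncard := by
    apply Set.ncard_le_ncard _ (σ.finite_le t)
    exact Set.inter_subset_left
  have h2 : (0 : ℝ) ≤ (u - s) / τ := div_nonneg (by linarith) hτ.le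
  calc ((Nsw (truncSignal σ t ht) s u : ℝ)) ≤ ((σ.instants ∩ Set.Iic t).ncard : ℝ) :=
        Nat.cast_le.2 h1
    _ ≤ _ := le_add_of_nonneg_right h2

lemma trunc_solution {m n : ℕ}
    (f : Fin m → EuclideanSpace ℝ (Fin n) → EuclideanSpace ℝ (Fin n))
    (F : WellPosed f) (σ : SwitchingSignal (Fin m))
    (x : ℝ → EuclideanSpace ℝ (Fin n)) (hx : IsSolution f σ x)
    (t : ℝ) (ht : 0 ≤ t) :
    IsSolution f (truncSignal σ t ht)
      (fun s => if s ≤ t then x s else F.Φ (σ.toFun t) (s - t) (x t)) := by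
  set i := σ.toFun t with hi
  set y : ℝ → EuclideanSpace ℝ (Fin n) := fun s => F.Φ i s (x t) with hydef
  have hy : IsSubSolution f i y := F.isSol i (x t)
  have hy0 : y 0 = x t := F.init i (x t)
  set x' : ℝ → EuclideanSpace ℝ (Fin n) :=
    fun s => if s ≤ t then x s else F.Φ i (s - t) (x t) with hx'def
  set g : ℝ → EuclideanSpace ℝ (Fin n) := fun s => y (s - t) with hgdef
  have hagree : ∀ s ∈ Set.Ici t, x' s = g s := by
    intro s hst
    by_cases h : s ≤ t
    · have hst' : s = t := le_antisymm h hst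
      subst hst'
      simp [x', g, hy0]
    · simp [x', g, y, h]
  constructor
  · -- continuity
    have c1 : ContinuousOn x' (Set.Icc 0 t) := by
      apply (hx.1.mono Set.Icc_subset_Ici_self).congr
      intro s hs
      exact if_pos hs.2
    have cg : ContinuousOn g (Set.Ici t) := by
      apply hy.1.comp ((continuous_id.sub continuous_const).continuousOn)
      intro s hs
      simpa using sub_nonneg.2 (Set.mem_Ici.1 hs)
    have c2 : ContinuousOn x' (Set.Ici t) := cg.congr hagree
    exact (contOn_union_closed isClosed_Icc isClosed_Ici c1 c2).mono
      Set.Ici_subset_Icc_union_Ici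
  · intro u hu0
    rcases lt_or_ge u t with hlt | hle
    · have htof : (truncSignal σ t ht).toFun u = σ.toFun u := by
        simp [truncSignal, min_eq_left hlt.le]
      have hxu : x' u = x u := if_pos hlt.le
      rw [htof, hxu]
      have h := hx.2 u hu0
      apply h.congr_of_eventuallyEq _ hxu
      filter_upwards [mem_nhdsWithin_of_mem_nhds (Iio_mem_nhds hlt)] with a ha
      exact if_pos ha.le
    · have htof : (truncSignal σ t ht).toFun u = i := by
        simp [truncSignal, min_eq_right hle, hi]
      have hxu : x' u = g u := hagree u hle
      rw [htof, hxu]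
      have hyd : HasDerivWithinAt y (f i (y (u - t))) (Set.Ici (u - t)) (u - t) :=
        hy.2 (u - t) (by linarith)
      have hginner : HasDerivWithinAt (fun s : ℝ => s - t) 1 (Set.Ici u) u :=
        (hasDerivWithinAt_id u _).sub_const t
      have hg : HasDerivWithinAt g (f i (y (u - t))) (Set.Ici u) u := by
        have := HasDerivWithinAt.scomp (t' := Set.Ici (u - t)) u hyd hginner
          (fun s hs => by simpa using sub_le_sub_right (α := ℝ) hs t)
        rw [one_smul] at this
        exact this
      have : g u = y (u - t) := rfl
      rw [this]
      exact hg.congr (fun s hs => hagree s (hle.trans hs)) hxu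

/-- UGAS (resp. UGES_ρ) w.r.t. `S∞_adw(τ)` is equivalent to UGAS (resp. UGES_ρ)
w.r.t. the class of all switching signals. -/
theorem ugas_adwInf_iff_arbitrary {m n : ℕ}
    (f : Fin m → EuclideanSpace ℝ (Fin n) → EuclideanSpace ℝ (Fin n))
    (F : WellPosed f) (τ : ℝ) (hτ : 0 < τ) :
    (UGAS f (SadwInf τ) ↔ UGAS f (fun _ => True)) ∧
    (∀ ρ : ℝ, 0 < ρ → (UGES f ρ (SadwInf τ) ↔ UGES f ρ (fun _ => True))) := by
  have key : ∀ (σ : SwitchingSignal (Fin m)) (x : ℝ → EuclideanSpace ℝ (Fin n)),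
      IsSolution f σ x → ∀ t : ℝ, 0 ≤ t →
      ∃ (σ' : SwitchingSignal (Fin m)) (x' : ℝ → EuclideanSpace ℝ (Fin n)),
        SadwInf τ σ' ∧ IsSolution f σ' x' ∧ x' 0 = x 0 ∧ x' t = x t := by
    intro σ x hx t ht
    exact ⟨truncSignal σ t ht, _, truncSignal_adw σ t τ ht hτ,
      trunc_solution f F σ x hx t ht, if_pos ht, if_pos le_rfl⟩
  constructor
  · constructor
    · rintro ⟨β, hβ, hb⟩
      refine ⟨β, hβ, fun σ _ x hx t ht => ?_⟩
      obtain ⟨σ', x', h1, h2, h3, h4⟩ := key σ x hx t ht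
      have := hb σ' h1 x' h2 t ht
      rwa [h3, h4] at this
    · rintro ⟨β, hβ, hb⟩
      exact ⟨β, hβ, fun σ _ x hx => hb σ trivial x hx⟩
  · intro ρ hρ
    constructor
    · rintro ⟨M, hM, hb⟩
      refine ⟨M, hM, fun σ _ x hx t ht => ?_⟩
      obtain ⟨σ', x', h1, h2, h3, h4⟩ := key σ x hx t ht
      have := hb σ' h1 x' h2 t ht
      rwa [h3, h4] at this
    · rintro ⟨M, hM, hb⟩
      exact ⟨M, hM, fun σ _ x hx => hb σ trivial x hx⟩
end

section
/- Let f₁,…,f_m : ℝⁿ → ℝⁿ with f_i(0) = 0 and let τ > 0. If the switched system ẋ = f_{σ(t)}(x) is τ-UGB, then for every λ > 0 there exist η̃₁, η̃₂ ∈ K∞ and α̃ ≥ 0 such that ‖x(t)‖ ≤ η̃₁(e^{α̃τ N_σ(0,t)} e^{−(λ+α̃)t} η̃₂(‖x(0)‖)) for every σ ∈ S, every solution x relative to σ and every t ≥ 0. -/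
lemma isClassKInf_rpow {p : ℝ} (hp : 0 < p) : IsClassKInf (fun r : ℝ => r ^ p) := by
  refine ⟨⟨?_, ?_, ?_⟩, ?_⟩
  · exact fun x _ => (Real.continuousAt_rpow_const x p (Or.inr hp.le)).continuousWithinAt
  · exact Real.zero_rpow hp.ne'
  · exact fun a ha b hb hab => Real.rpow_lt_rpow ha hab hp
  · intro M
    refine ⟨(max M 0) ^ (1 / p), Real.rpow_nonneg (le_max_right _ _) _, ?_⟩
    show M ≤ ((max M 0) ^ (1 / p)) ^ p
    rw [← Real.rpow_mul (le_max_right _ _), one_div, inv_mul_cancel₀ hp.ne',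
      Real.rpow_one]
    exact le_max_left _ _

lemma isClassKInf_nonneg {g : ℝ → ℝ} (hg : IsClassKInf g) {r : ℝ} (hr : 0 ≤ r) :
    0 ≤ g r := by
  rcases eq_or_lt_of_le hr with rfl | hr'
  · exact le_of_eq hg.1.2.1.symm
  · exact le_of_lt (hg.1.2.1 ▸ hg.1.2.2 (show (0:ℝ) ∈ Set.Ici 0 from le_refl (0:ℝ)) hr hr')

lemma isClassKInf_comp {g h : ℝ → ℝ} (hg : IsClassKInf g) (hh : IsClassKInf h) :
    IsClassKInf (fun r => g (h r)) := by
  have hmaps : Set.MapsTo h (Set.Ici (0:ℝ)) (Set.Ici 0) :=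
    fun r hr => isClassKInf_nonneg hh hr
  refine ⟨⟨hg.1.1.comp hh.1.1 hmaps, by simp [hh.1.2.1, hg.1.2.1], ?_⟩, ?_⟩
  · intro a ha b hb hab
    exact hg.1.2.2 (hmaps ha) (hmaps hb) (hh.1.2.2 ha hb hab)
  · intro M
    obtain ⟨r₁, hr₁, hMr₁⟩ := hg.2 M
    obtain ⟨r₂, hr₂, hr₁r₂⟩ := hh.2 r₁
    refine ⟨r₂, hr₂, hMr₁.trans ?_⟩
    exact hg.1.2.2.monotoneOn hr₁ (hmaps hr₂) hr₁r₂

lemma exp_rpow (a p : ℝ) : (Real.exp a) ^ p = Real.exp (p * a) := by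
  rw [Real.rpow_def_of_pos (Real.exp_pos a), Real.log_exp, mul_comm]

/-- Speed transformation: if the switched system is `τ`-UGB, then the decay rate `1`
in the defining estimate can be replaced by any `λ > 0`. -/
theorem tauUGB_speed_transformation {m n : ℕ}
    (f : Fin m → EuclideanSpace ℝ (Fin n) → EuclideanSpace ℝ (Fin n))
    (hf0 : ∀ i, f i 0 = 0) (τ : ℝ) (hτ : 0 < τ) (h : TauUGB f τ) :
    ∀ lam : ℝ, 0 < lam →
      ∃ η₁ η₂ : ℝ → ℝ, ∃ αt : ℝ, IsClassKInf η₁ ∧ IsClassKInf η₂ ∧ 0 ≤ αt ∧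
        ∀ σ : SwitchingSignal (Fin m), ∀ x : ℝ → EuclideanSpace ℝ (Fin n),
          IsSolution f σ x → ∀ t : ℝ, 0 ≤ t →
            ‖x t‖ ≤ η₁ (Real.exp (αt * τ * (Nsw σ 0 t : ℝ)) *
              Real.exp (-(lam + αt) * t) * η₂ ‖x 0‖) := by
  obtain ⟨η₁, η₂, α, hη₁, hη₂, hα, hbound⟩ := h
  intro lam hlam
  refine ⟨fun r => η₁ (r ^ (1 / lam)), fun s => (η₂ s) ^ lam, lam * α,
    isClassKInf_comp hη₁ (isClassKInf_rpow (by positivity)),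
    isClassKInf_comp (isClassKInf_rpow hlam) hη₂,
    by positivity, ?_⟩
  intro σ x hx t ht
  have hE := hbound σ x hx t ht
  set E : ℝ := Real.exp (α * τ * (Nsw σ 0 t : ℝ)) * Real.exp (-(1 + α) * t) * η₂ ‖x 0‖
    with hEdef
  have hη₂x : 0 ≤ η₂ ‖x 0‖ := isClassKInf_nonneg hη₂ (norm_nonneg _)
  have hEnn : 0 ≤ E := by positivity
  have key : Real.exp (lam * α * τ * (Nsw σ 0 t : ℝ)) * Real.exp (-(lam + lam * α) * t) *
      (η₂ ‖x 0‖) ^ lam = E ^ lam := by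
    rw [hEdef, Real.mul_rpow (by positivity) hη₂x,
      Real.mul_rpow (Real.exp_pos _).le (Real.exp_pos _).le, exp_rpow, exp_rpow]
    ring_nf
  calc ‖x t‖ ≤ η₁ E := hE
    _ = η₁ ((Real.exp (lam * α * τ * (Nsw σ 0 t : ℝ)) * Real.exp (-(lam + lam * α) * t) *
        (η₂ ‖x 0‖) ^ lam) ^ (1 / lam)) := by
        rw [key, ← Real.rpow_mul hEnn, mul_one_div, div_self hlam.ne', Real.rpow_one]
end

section
/- Let {f_i}_{i∈I} be well-posed and let τ > 0. Suppose there exist W₁,…,W_m ∈ Lip₀(ℝⁿ,ℝ), α̃₁, α̃₂ ∈ K∞ and α ≥ 0 such that for all i, j ∈ I and all x ∈ ℝⁿ: (a) α̃₁(‖x‖) ≤ W_i(x) ≤ α̃₂(‖x‖); (b) D⁺_{f_i}W_i(x) ≤ −(1+α) W_i(x); (c) W_i(x) ≤ e^{ατ} W_j(x). Then for every switching signal σ ∈ S, every solution x of the switched system relative to σ and every t ≥ 0, one has W_{σ(t)}(x(t)) ≤ e^{ατ N_σ(0,t)} e^{−(1+α)t} W_{σ(0)}(x(0)); consequently ‖x(t)‖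 ≤ α̃₁⁻¹(e^{ατ N_σ(0,t)} e^{−(1+α)t} α̃₂(‖x(0)‖)), and the switched system is τ-UGB. -/
section AuxProofs

open Set Filter Real

private theorem classK_nonneg {a : ℝ → ℝ} (ha : IsClassK a) {r : ℝ} (hr : 0 ≤ r) : 0 ≤ a r := by
  rcases eq_or_lt_of_le hr with h | h
  · rw [← h, ha.2.1]
  · rw [← ha.2.1]
    exact (ha.2.2 Set.self_mem_Ici (Set.mem_Ici.2 hr) h).le

private theorem glue_flow {m n : ℕ}
    {f : Fin m → EuclideanSpace ℝ (Fin n) → EuclideanSpace ℝ (Fin n)}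
    (F : WellPosed f) (i : Fin m) {x : ℝ → EuclideanSpace ℝ (Fin n)}
    (hx : ContinuousOn x (Set.Ici 0)) {a b : ℝ} (ha : 0 ≤ a) (hab : a ≤ b)
    (hderiv : ∀ u ∈ Set.Ico a b, HasDerivWithinAt x (f i (x u)) (Set.Ici u) u) :
    ∀ h ∈ Set.Icc 0 (b - a), x (a + h) = F.Φ i h (x a) := by
  classical
  have hc0 : 0 ≤ b - a := by linarith
  set c := b - a with hc
  set z := x b with hz
  set y : ℝ → EuclideanSpace ℝ (Fin n) :=
    fun h => if h ≤ c then x (a + h) else F.Φ i (h - c) z with hy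
  have hΦc : ContinuousOn (fun s => F.Φ i s z) (Set.Ici 0) := (F.isSol i z).1
  have hacb : a + c = b := by rw [hc]; ring
  have hycont : ContinuousOn y (Set.Ici 0) := by
    apply ContinuousOn.if
    · intro h hh
      have hfr : h ∈ frontier (Set.Iic c) := hh.2
      rw [frontier_Iic, Set.mem_singleton_iff] at hfr
      subst hfr
      rw [hacb, sub_self, F.init]
    · apply ContinuousOn.comp hx ((continuous_const.add continuous_id).continuousOn)
      intro h hh
      have h0 : (0:ℝ) ≤ h := hh.1
      simp only [Set.mem_Ici, id_eq, Pi.add_apply, Pi.sub_apply]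
      linarith
    · have hcl : closure {h : ℝ | ¬ h ≤ c} = Set.Ici c := by
        rw [show {h : ℝ | ¬ h ≤ c} = Set.Ioi c by ext u; simp [not_le], closure_Ioi]
      rw [hcl]
      apply ContinuousOn.comp hΦc ((continuous_id.sub continuous_const).continuousOn)
      intro h hh
      have h0 : c ≤ h := hh.2
      simp only [Set.mem_Ici, id_eq, Pi.add_apply, Pi.sub_apply]
      linarith
  have hyderiv : ∀ t : ℝ, 0 ≤ t → HasDerivWithinAt y (f i (y t)) (Set.Ici t) t := by
    intro t ht
    rcases lt_or_ge t c with hlt | hge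
    · -- t < c : y agrees with x (a + ·) near t
      have h1 : HasDerivWithinAt x (f i (x (a + t))) (Set.Ici (a + t)) (a + t) :=
        hderiv (a + t) ⟨by linarith, by rw [← hacb]; linarith⟩
      have h2 : HasDerivWithinAt (fun h : ℝ => a + h) 1 (Set.Ici t) t :=
        ((hasDerivAt_id t).const_add a).hasDerivWithinAt
      have hxt : HasDerivWithinAt (fun h : ℝ => x (a + h)) (f i (x (a + t)))
          (Set.Ici t) t := by
        have := h1.scomp t h2 (fun u hu => by
          simp only [Set.mem_Ici] at hu ⊢; linarith)
        simpa [Function.comp_def] using this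
      have heq : y =ᶠ[nhdsWithin t (Set.Ici t)] (fun h : ℝ => x (a + h)) := by
        apply Filter.eventuallyEq_of_mem
          (mem_nhdsWithin_of_mem_nhds (Iic_mem_nhds hlt))
        intro u hu
        exact if_pos hu
      have hyt : y t = x (a + t) := by simp only [y, if_pos hlt.le]
      rw [hyt]
      exact hxt.congr_of_eventuallyEq heq hyt
    · -- c ≤ t : y agrees with the flow part on Ici t
      have htc : (0:ℝ) ≤ t - c := by linarith
      have h1 := (F.isSol i z).2 (t - c) htc
      have h2 : HasDerivWithinAt (fun h : ℝ => h - c) 1 (Set.Ici t) t :=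
        ((hasDerivAt_id t).sub_const c).hasDerivWithinAt
      have hΨ : HasDerivWithinAt (fun h : ℝ => F.Φ i (h - c) z) (f i (F.Φ i (t - c) z))
          (Set.Ici t) t := by
        have := h1.scomp t h2 (fun u hu => by
          simp only [Set.mem_Ici] at hu ⊢; linarith)
        simpa [Function.comp_def] using this
      have hset : ∀ u ∈ Set.Ici t, y u = F.Φ i (u - c) z := by
        intro u hu
        simp only [Set.mem_Ici] at hu
        by_cases huc : u ≤ c
        · have huc' : u = c := le_antisymm huc (le_trans hge hu)
          subst huc'
          simp only [hy]
          rw [if_pos le_rfl, hacb, sub_self, F.init]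
        · simp only [hy]
          rw [if_neg huc]
      have hyt : y t = F.Φ i (t - c) z := hset t Set.self_mem_Ici
      rw [hyt]
      exact hΨ.congr hset hyt
  have h0 : y 0 = x a := by
    simp only [y, if_pos hc0, add_zero]
  have huniq := F.unique i (x a) y ⟨hycont, hyderiv⟩ h0
  intro h hh
  rw [← huniq h hh.1]
  simp only [y, if_pos hh.2]

private theorem W_continuous {n : ℕ} {W : EuclideanSpace ℝ (Fin n) → ℝ} {a₁ a₂ : ℝ → ℝ}
    (hW : Lip0 W) (ha₁ : IsClassKInf a₁) (ha₂ : IsClassKInf a₂)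
    (hs : ∀ x, a₁ ‖x‖ ≤ W x ∧ W x ≤ a₂ ‖x‖) : Continuous W := by
  rw [continuous_iff_continuousAt]
  intro x
  by_cases hx : x = 0
  · subst hx
    have hl := (hs 0).1
    have hr := (hs 0).2
    rw [norm_zero, ha₁.1.2.1] at hl
    rw [norm_zero, ha₂.1.2.1] at hr
    have hW0 : W 0 = 0 := le_antisymm hr hl
    rw [ContinuousAt, hW0]
    have h1 : Filter.Tendsto (fun y : EuclideanSpace ℝ (Fin n) => ‖y‖) (nhds 0)
        (nhdsWithin 0 (Set.Ici 0)) := by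
      rw [tendsto_nhdsWithin_iff]
      constructor
      · simpa using continuous_norm.tendsto (0 : EuclideanSpace ℝ (Fin n))
      · exact Filter.Eventually.of_forall fun y => norm_nonneg y
    have h2 : Filter.Tendsto a₂ (nhdsWithin 0 (Set.Ici 0)) (nhds 0) := by
      have := ha₂.1.1 0 Set.self_mem_Ici
      rw [ContinuousWithinAt, ha₂.1.2.1] at this
      exact this
    exact squeeze_zero
      (fun y => le_trans (classK_nonneg ha₁.1 (norm_nonneg y)) (hs y).1)
      (fun y => (hs y).2) (h2.comp h1)
  · obtain ⟨K, s, hsmem, hlip⟩ := hW x hx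
    exact hlip.continuousOn.continuousAt hsmem

private theorem decay_lemma {m n : ℕ}
    {f : Fin m → EuclideanSpace ℝ (Fin n) → EuclideanSpace ℝ (Fin n)}
    (F : WellPosed f) (i : Fin m) {W : EuclideanSpace ℝ (Fin n) → ℝ} {c : ℝ}
    (hWc : Continuous W)
    (hdec : ∀ x, dini (F.Φ i) W x ≤ ((-(c * W x) : ℝ) : EReal))
    {x : ℝ → EuclideanSpace ℝ (Fin n)} (hx : ContinuousOn x (Set.Ici 0))
    {a b : ℝ} (ha : 0 ≤ a) (hab : a ≤ b)
    (hderiv : ∀ u ∈ Set.Ico a b, HasDerivWithinAt x (f i (x u)) (Set.Ici u) u) :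
    W (x b) ≤ Real.exp (-c * (b - a)) * W (x a) := by
  have hcont : ContinuousOn (fun u => W (x u)) (Set.Icc a b) :=
    hWc.comp_continuousOn (hx.mono (fun u hu => le_trans ha hu.1))
  have hslope : ∀ u ∈ Set.Ico a b, ∀ r, -c * W (x u) < r →
      ∃ᶠ z in nhdsWithin u (Set.Ioi u), (z - u)⁻¹ * (W (x z) - W (x u)) < r := by
    intro u hu r hr
    have hflow : ∀ h ∈ Set.Icc 0 (b - u), x (u + h) = F.Φ i h (x u) :=
      glue_flow F i hx (le_trans ha hu.1) hu.2.le
        (fun v hv => hderiv v ⟨le_trans hu.1 hv.1, hv.2⟩)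
    have hlim : Filter.limsup
        (fun h : ℝ => (((W (F.Φ i h (x u)) - W (x u)) / h : ℝ) : EReal))
        (nhdsWithin 0 (Set.Ioi 0)) < ((r : ℝ) : EReal) := by
      refine lt_of_le_of_lt (hdec (x u)) ?_
      exact_mod_cast (by linarith : -(c * W (x u)) < r)
    have hev := Filter.eventually_lt_of_limsup_lt hlim
    have hev2 : ∀ᶠ h in nhdsWithin (0:ℝ) (Set.Ioi 0),
        (W (x (u + h)) - W (x u)) / h < r := by
      have hmem : Set.Ioc (0:ℝ) (b - u) ∈ nhdsWithin (0:ℝ) (Set.Ioi 0) :=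
        Ioc_mem_nhdsGT_of_mem ⟨le_rfl, by linarith [hu.2]⟩
      filter_upwards [hev, hmem] with h h1 h2
      rw [hflow h ⟨h2.1.le, h2.2⟩]
      exact_mod_cast h1
    have htend : Filter.Tendsto (fun z : ℝ => z - u) (nhdsWithin u (Set.Ioi u))
        (nhdsWithin 0 (Set.Ioi 0)) := by
      rw [tendsto_nhdsWithin_iff]
      constructor
      · have := (continuous_id.sub (continuous_const (y := u))).tendsto u
        simpa [Pi.sub_def] using this.mono_left nhdsWithin_le_nhds
      · exact eventually_mem_nhdsWithin.mono (fun z hz => Set.mem_Ioi.2 (sub_pos.2 (Set.mem_Ioi.1 hz)))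
    apply Filter.Eventually.frequently
    filter_upwards [htend.eventually hev2] with z hz
    have hzz : u + (z - u) = z := by ring
    rw [hzz] at hz
    rwa [div_eq_inv_mul] at hz
  have hbound : ∀ u ∈ Set.Ico a b, -c * W (x u) ≤ -c * W (x u) + 0 :=
    fun u _ => by linarith
  have := le_gronwallBound_of_liminf_deriv_right_le hcont hslope le_rfl hbound b
    ⟨hab, le_rfl⟩
  rw [gronwallBound_ε0] at this
  rwa [mul_comm (Real.exp (-c * (b - a)))]

private theorem exists_classKInf_inverse {a : ℝ → ℝ} (ha : IsClassKInf a) :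
    ∃ η : ℝ → ℝ, IsClassKInf η ∧ Monotone η ∧ ∀ r : ℝ, 0 ≤ r → η (a r) = r := by
  classical
  set A : ℝ → ℝ := fun y => if y ≤ 0 then y else a y with hA
  have hA0 : A 0 = 0 := by simp [A]
  have hAeq : ∀ r : ℝ, 0 ≤ r → A r = a r := by
    intro r hr
    rcases eq_or_lt_of_le hr with h | h
    · rw [← h, hA0, ha.1.2.1]
    · simp [A, not_le.2 h]
  have hstrict : StrictMono A := by
    intro u v huv
    by_cases hu : u ≤ 0 <;> by_cases hv : v ≤ 0
    · simpa [A, hu, hv] using huv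
    · push_neg at hv
      have hav : 0 < a v := by
        rw [← ha.1.2.1]
        exact ha.1.2.2 Set.self_mem_Ici (Set.mem_Ici.2 hv.le) hv
      simp only [A, if_pos hu, if_neg (not_le.2 hv)]
      linarith
    · exact absurd (le_trans huv.le hv) hu
    · push_neg at hu hv
      simp only [A, if_neg (not_le.2 hu), if_neg (not_le.2 hv)]
      exact ha.1.2.2 (Set.mem_Ici.2 hu.le) (Set.mem_Ici.2 hv.le) huv
  have hsurj : Function.Surjective A := by
    intro w
    by_cases hw : w ≤ 0
    · exact ⟨w, by simp [A, hw]⟩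
    · push_neg at hw
      obtain ⟨r, hr0, hrw⟩ := ha.2 w
      have hcont : ContinuousOn a (Set.Icc 0 r) := ha.1.1.mono (fun u hu => hu.1)
      have hmem : w ∈ Set.Icc (a 0) (a r) := ⟨by rw [ha.1.2.1]; linarith, hrw⟩
      obtain ⟨u, hu, hau⟩ := intermediate_value_Icc hr0 hcont hmem
      exact ⟨u, by rw [hAeq u hu.1, hau]⟩
  set e := StrictMono.orderIsoOfSurjective A hstrict hsurj with he
  have hecoe : ∀ v : ℝ, e v = A v := fun v => by
    rw [he, StrictMono.coe_orderIsoOfSurjective]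
  have hinv : ∀ v : ℝ, e.symm (A v) = v := by
    intro v
    rw [← hecoe v]
    exact e.symm_apply_apply v
  have hηcont : Continuous (fun v : ℝ => e.symm v) := e.symm.continuous
  have hη0 : e.symm 0 = 0 := by
    have := hinv 0
    rwa [hA0] at this
  refine ⟨fun v => e.symm v, ⟨⟨hηcont.continuousOn, hη0, ?_⟩, ?_⟩, e.symm.monotone, ?_⟩
  · exact e.symm.strictMono.strictMonoOn _
  · intro M
    refine ⟨A (max M 0), ?_, ?_⟩
    · calc (0:ℝ) = A 0 := hA0.symm
        _ ≤ A (max M 0) := hstrict.monotone (le_max_right M 0)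
    · show M ≤ e.symm (A (max M 0))
      rw [hinv]
      exact le_max_left M 0
  · intro r hr
    show e.symm (a r) = r
    rw [← hAeq r hr, hinv]

end AuxProofs

/-- Sufficiency of the "linearized" multiple Lyapunov-function conditions: the decay
estimate on `W_{σ(t)}(x(t))`, the resulting state bound, and `τ`-UGB. -/
theorem multiple_lyapunov_implies_tauUGB {m n : ℕ}
    (f : Fin m → EuclideanSpace ℝ (Fin n) → EuclideanSpace ℝ (Fin n))
    (F : WellPosed f) (τ : ℝ) (hτ : 0 < τ)
    (W : Fin m → EuclideanSpace ℝ (Fin n) → ℝ) (a₁ a₂ : ℝ → ℝ) (α : ℝ)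
    (hW : ∀ i, Lip0 (W i)) (ha₁ : IsClassKInf a₁) (ha₂ : IsClassKInf a₂) (hα : 0 ≤ α)
    (hsand : ∀ i x, a₁ ‖x‖ ≤ W i x ∧ W i x ≤ a₂ ‖x‖)
    (hdec : ∀ i x, dini (F.Φ i) (W i) x ≤ ((-((1 + α) * W i x) : ℝ) : EReal))
    (hjump : ∀ i j x, W i x ≤ Real.exp (α * τ) * W j x) :
    (∀ σ : SwitchingSignal (Fin m), ∀ x : ℝ → EuclideanSpace ℝ (Fin n),
      IsSolution f σ x → ∀ t : ℝ, 0 ≤ t →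
        W (σ.toFun t) (x t) ≤ Real.exp (α * τ * (Nsw σ 0 t : ℝ)) *
          Real.exp (-(1 + α) * t) * W (σ.toFun 0) (x 0)) ∧
    (∀ σ : SwitchingSignal (Fin m), ∀ x : ℝ → EuclideanSpace ℝ (Fin n),
      IsSolution f σ x → ∀ t : ℝ, 0 ≤ t →
        a₁ ‖x t‖ ≤ Real.exp (α * τ * (Nsw σ 0 t : ℝ)) *
          Real.exp (-(1 + α) * t) * a₂ ‖x 0‖) ∧
    TauUGB f τ := by
  have Wcont : ∀ i, Continuous (W i) :=
    fun i => W_continuous (hW i) ha₁ ha₂ (fun y => hsand i y)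
  have Wnn : ∀ i y, 0 ≤ W i y :=
    fun i y => le_trans (classK_nonneg ha₁.1 (norm_nonneg y)) (hsand i y).1
  have main : ∀ σ : SwitchingSignal (Fin m), ∀ x : ℝ → EuclideanSpace ℝ (Fin n),
      IsSolution f σ x → ∀ t : ℝ, 0 ≤ t →
        W (σ.toFun t) (x t) ≤ Real.exp (α * τ * (Nsw σ 0 t : ℝ)) *
          Real.exp (-(1 + α) * t) * W (σ.toFun 0) (x 0) := by
    intro σ x hsol
    have hfin : ∀ s t : ℝ, (σ.instants ∩ Set.Ioc s t).Finite := fun s t =>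
      (σ.finite_le t).subset (fun u hu => ⟨hu.1, hu.2.2⟩)
    have hfin2 : ∀ s t : ℝ, (σ.instants ∩ Set.Ico s t).Finite := fun s t =>
      (σ.finite_le t).subset (fun u hu => ⟨hu.1, hu.2.2.le⟩)
    suffices H : ∀ k : ℕ, ∀ t : ℝ, 0 ≤ t → (σ.instants ∩ Set.Ioc 0 t).ncard = k →
        W (σ.toFun t) (x t) ≤ Real.exp (α * τ * (Nsw σ 0 t : ℝ)) *
          Real.exp (-(1 + α) * t) * W (σ.toFun 0) (x 0) by
      intro t ht
      exact H _ t ht rfl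
    intro k
    induction k with
    | zero =>
      intro t ht hcard
      have hempty : σ.instants ∩ Set.Ioc 0 t = ∅ :=
        (Set.ncard_eq_zero (hfin 0 t)).mp hcard
      have hσ : ∀ u, 0 ≤ u → u ≤ t → σ.toFun 0 = σ.toFun u := by
        intro u hu0 hut
        apply σ.const_between 0 u le_rfl hu0
        apply Set.eq_empty_of_subset_empty
        rw [← hempty]
        exact Set.inter_subset_inter_right _ (Set.Ioc_subset_Ioc_right hut)
      have hd : ∀ u ∈ Set.Ico 0 t,
          HasDerivWithinAt x (f (σ.toFun 0) (x u)) (Set.Ici u) u := by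
        intro u hu
        have := hsol.2 u hu.1
        rwa [← hσ u hu.1 hu.2.le] at this
      have hdecay := decay_lemma F (σ.toFun 0) (Wcont _)
        (fun y => hdec (σ.toFun 0) y) hsol.1 le_rfl ht hd
      rw [← hσ t ht le_rfl]
      have h1 : (1:ℝ) ≤ Real.exp (α * τ * (Nsw σ 0 t : ℝ)) := by
        apply Real.one_le_exp
        exact mul_nonneg (mul_nonneg hα hτ.le) (Nat.cast_nonneg _)
      have h2 : (0:ℝ) < Real.exp (-(1 + α) * t) := Real.exp_pos _
      calc W (σ.toFun 0) (x t)
          ≤ Real.exp (-(1 + α) * (t - 0)) * W (σ.toFun 0) (x 0) := hdecay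
        _ = Real.exp (-(1 + α) * t) * W (σ.toFun 0) (x 0) := by rw [sub_zero]
        _ ≤ Real.exp (α * τ * (Nsw σ 0 t : ℝ)) * Real.exp (-(1 + α) * t) *
            W (σ.toFun 0) (x 0) := by
            nlinarith [mul_le_mul_of_nonneg_right h1
              (mul_nonneg h2.le (Wnn (σ.toFun 0) (x 0)))]
    | succ k IH =>
      intro t ht hcard
      have hSfin : (σ.instants ∩ Set.Ioc 0 t).Finite := hfin 0 t
      have hSne : (σ.instants ∩ Set.Ioc 0 t).Nonempty :=
        Set.nonempty_of_ncard_ne_zero (by omega)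
      obtain ⟨s₁, hs₁S, hs₁m⟩ := Set.Finite.exists_maximalFor id _ hSfin hSne
      have hs₁max : ∀ u ∈ σ.instants ∩ Set.Ioc 0 t, u ≤ s₁ := by
        intro u hu
        by_contra hlt
        push_neg at hlt
        have := hs₁m hu hlt.le
        simp only [id] at this
        exact absurd this (not_le.2 hlt)
      have hs₁pos : 0 < s₁ := hs₁S.2.1
      have hs₁t : s₁ ≤ t := hs₁S.2.2
      have hs₁inst : s₁ ∈ σ.instants := hs₁S.1
      have hS'fin : (σ.instants ∩ Set.Ico 0 s₁).Finite := hfin2 0 s₁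
      have hS'ne : (σ.instants ∩ Set.Ico 0 s₁).Nonempty :=
        ⟨0, σ.zero_mem, le_rfl, hs₁pos⟩
      obtain ⟨s₀, hs₀S, hs₀m⟩ := Set.Finite.exists_maximalFor id _ hS'fin hS'ne
      have hs₀max : ∀ u ∈ σ.instants ∩ Set.Ico 0 s₁, u ≤ s₀ := by
        intro u hu
        by_contra hlt
        push_neg at hlt
        have := hs₀m hu hlt.le
        simp only [id] at this
        exact absurd this (not_le.2 hlt)
      have hs₀0 : 0 ≤ s₀ := hs₀S.2.1
      have hs₀1 : s₀ < s₁ := hs₀S.2.2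
      have hs₀inst : s₀ ∈ σ.instants := hs₀S.1
      have e1 : σ.instants ∩ Set.Ioc s₁ t = ∅ := by
        rw [Set.eq_empty_iff_forall_notMem]
        rintro u ⟨hu1, hu2, hu3⟩
        have hmem : u ∈ σ.instants ∩ Set.Ioc 0 t := ⟨hu1, lt_trans hs₁pos hu2, hu3⟩
        linarith [hs₁max u hmem]
      have e2 : σ.instants ∩ Set.Ioo s₀ s₁ = ∅ := by
        rw [Set.eq_empty_iff_forall_notMem]
        rintro u ⟨hu1, hu2, hu3⟩
        have hmem : u ∈ σ.instants ∩ Set.Ico 0 s₁ :=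
          ⟨hu1, le_trans hs₀0 hu2.le, hu3⟩
        linarith [hs₀max u hmem]
      have hσ1 : ∀ u, s₁ ≤ u → u ≤ t → σ.toFun s₁ = σ.toFun u := by
        intro u h1 h2
        apply σ.const_between s₁ u hs₁pos.le h1
        apply Set.eq_empty_of_subset_empty
        rw [← e1]
        exact Set.inter_subset_inter_right _ (Set.Ioc_subset_Ioc_right h2)
      have hσ0 : ∀ u, s₀ ≤ u → u < s₁ → σ.toFun s₀ = σ.toFun u := by
        intro u h1 h2
        apply σ.const_between s₀ u hs₀0 h1
        apply Set.eq_empty_of_subset_empty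
        rw [← e2]
        apply Set.inter_subset_inter_right
        intro v hv
        exact ⟨hv.1, lt_of_le_of_lt hv.2 h2⟩
      have hd1 : ∀ u ∈ Set.Ico s₁ t,
          HasDerivWithinAt x (f (σ.toFun s₁) (x u)) (Set.Ici u) u := by
        intro u hu
        have := hsol.2 u (le_trans hs₁pos.le hu.1)
        rwa [← hσ1 u hu.1 hu.2.le] at this
      have D1 : W (σ.toFun s₁) (x t) ≤
          Real.exp (-(1 + α) * (t - s₁)) * W (σ.toFun s₁) (x s₁) :=
        decay_lemma F _ (Wcont _) (fun y => hdec (σ.toFun s₁) y) hsol.1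
          hs₁pos.le hs₁t hd1
      have hd0 : ∀ u ∈ Set.Ico s₀ s₁,
          HasDerivWithinAt x (f (σ.toFun s₀) (x u)) (Set.Ici u) u := by
        intro u hu
        have := hsol.2 u (le_trans hs₀0 hu.1)
        rwa [← hσ0 u hu.1 hu.2] at this
      have D0 : W (σ.toFun s₀) (x s₁) ≤
          Real.exp (-(1 + α) * (s₁ - s₀)) * W (σ.toFun s₀) (x s₀) :=
        decay_lemma F _ (Wcont _) (fun y => hdec (σ.toFun s₀) y) hsol.1
          hs₀0 hs₀1.le hd0
      have hsplit : σ.instants ∩ Set.Ioc 0 t =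
          (σ.instants ∩ Set.Ioc 0 s₀) ∪ {s₁} := by
        ext u
        constructor
        · rintro ⟨hu1, hu2, hu3⟩
          by_cases h : u = s₁
          · exact Or.inr h
          · left
            have hule : u ≤ s₁ := hs₁max u ⟨hu1, hu2, hu3⟩
            have hult : u < s₁ := lt_of_le_of_ne hule h
            have hnoo : u ∉ Set.Ioo s₀ s₁ := fun hmem =>
              Set.eq_empty_iff_forall_notMem.mp e2 u ⟨hu1, hmem⟩
            have hus0 : u ≤ s₀ := by
              by_contra hh
              push_neg at hh
              exact hnoo ⟨hh, hult⟩
            exact ⟨hu1, hu2, hus0⟩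
        · rintro (⟨hu1, hu2, hu3⟩ | h)
          · exact ⟨hu1, hu2, le_trans hu3 (le_trans hs₀1.le hs₁t)⟩
          · rw [Set.mem_singleton_iff] at h
            subst h
            exact hs₁S
      have hcard' : (σ.instants ∩ Set.Ioc 0 s₀).ncard = k := by
        have h2 : ((σ.instants ∩ Set.Ioc 0 s₀) ∪ {s₁}).ncard = k + 1 := by
          rw [← hsplit]
          exact hcard
        rw [Set.ncard_union_eq
          (Set.disjoint_singleton_right.mpr
            (fun h => absurd h.2.2 (not_le.2 hs₀1)))
          (hfin 0 s₀) (Set.finite_singleton s₁), Set.ncard_singleton] at h2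
        omega
      have IH0 := IH s₀ hs₀0 hcard'
      have hNle : (Nsw σ 0 s₀ : ℝ) + 1 ≤ (Nsw σ 0 t : ℝ) := by
        have hsub : insert s₀ (σ.instants ∩ Set.Ico 0 s₀) ⊆
            σ.instants ∩ Set.Ico 0 t := by
          rintro u hu
          rcases Set.mem_insert_iff.mp hu with rfl | hu'
          · exact ⟨hs₀inst, hs₀0, lt_of_lt_of_le hs₀1 hs₁t⟩
          · exact ⟨hu'.1, hu'.2.1, lt_of_lt_of_le (lt_trans hu'.2.2 hs₀1) hs₁t⟩
        have hcardins : (insert s₀ (σ.instants ∩ Set.Ico 0 s₀)).ncard =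
            Nsw σ 0 s₀ + 1 :=
          Set.ncard_insert_of_notMem (fun h => lt_irrefl s₀ h.2.2) (hfin2 0 s₀)
        have hle := Set.ncard_le_ncard hsub (hfin2 0 t)
        rw [hcardins] at hle
        have : Nsw σ 0 s₀ + 1 ≤ Nsw σ 0 t := hle
        exact_mod_cast this
      have hσt : σ.toFun s₁ = σ.toFun t := hσ1 t hs₁t le_rfl
      have hjmp := hjump (σ.toFun s₁) (σ.toFun s₀) (x s₁)
      calc W (σ.toFun t) (x t) = W (σ.toFun s₁) (x t) := by rw [hσt]
        _ ≤ Real.exp (-(1 + α) * (t - s₁)) * W (σ.toFun s₁) (x s₁) := D1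
        _ ≤ Real.exp (-(1 + α) * (t - s₁)) *
            (Real.exp (α * τ) * W (σ.toFun s₀) (x s₁)) :=
          mul_le_mul_of_nonneg_left hjmp (Real.exp_pos _).le
        _ ≤ Real.exp (-(1 + α) * (t - s₁)) * (Real.exp (α * τ) *
            (Real.exp (-(1 + α) * (s₁ - s₀)) * W (σ.toFun s₀) (x s₀))) := by
          apply mul_le_mul_of_nonneg_left _ (Real.exp_pos _).le
          exact mul_le_mul_of_nonneg_left D0 (Real.exp_pos _).le
        _ ≤ Real.exp (-(1 + α) * (t - s₁)) * (Real.exp (α * τ) *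
            (Real.exp (-(1 + α) * (s₁ - s₀)) *
            (Real.exp (α * τ * (Nsw σ 0 s₀ : ℝ)) * Real.exp (-(1 + α) * s₀) *
              W (σ.toFun 0) (x 0)))) := by
          apply mul_le_mul_of_nonneg_left _ (Real.exp_pos _).le
          apply mul_le_mul_of_nonneg_left _ (Real.exp_pos _).le
          exact mul_le_mul_of_nonneg_left IH0 (Real.exp_pos _).le
        _ = Real.exp (-(1 + α) * (t - s₁)) * Real.exp (α * τ) *
            Real.exp (-(1 + α) * (s₁ - s₀)) * Real.exp (α * τ * (Nsw σ 0 s₀ : ℝ)) *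
            Real.exp (-(1 + α) * s₀) * W (σ.toFun 0) (x 0) := by ring
        _ = Real.exp (α * τ * ((Nsw σ 0 s₀ : ℝ) + 1) + -(1 + α) * t) *
            W (σ.toFun 0) (x 0) := by
          rw [← Real.exp_add, ← Real.exp_add, ← Real.exp_add, ← Real.exp_add]
          congr 1
          ring
        _ ≤ Real.exp (α * τ * (Nsw σ 0 t : ℝ) + -(1 + α) * t) *
            W (σ.toFun 0) (x 0) := by
          apply mul_le_mul_of_nonneg_right _ (Wnn _ _)
          apply Real.exp_le_exp.mpr
          have hm : α * τ * ((Nsw σ 0 s₀ : ℝ) + 1) ≤ α * τ * (Nsw σ 0 t : ℝ) :=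
            mul_le_mul_of_nonneg_left hNle (mul_nonneg hα hτ.le)
          linarith
        _ = Real.exp (α * τ * (Nsw σ 0 t : ℝ)) * Real.exp (-(1 + α) * t) *
            W (σ.toFun 0) (x 0) := by rw [Real.exp_add]
  have bound2 : ∀ σ : SwitchingSignal (Fin m), ∀ x : ℝ → EuclideanSpace ℝ (Fin n),
      IsSolution f σ x → ∀ t : ℝ, 0 ≤ t →
        a₁ ‖x t‖ ≤ Real.exp (α * τ * (Nsw σ 0 t : ℝ)) *
          Real.exp (-(1 + α) * t) * a₂ ‖x 0‖ := by
    intro σ x hsol t ht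
    have h1 := (hsand (σ.toFun t) (x t)).1
    have h2 := main σ x hsol t ht
    have h3 : W (σ.toFun 0) (x 0) ≤ a₂ ‖x 0‖ := (hsand _ _).2
    have hE : (0:ℝ) ≤ Real.exp (α * τ * (Nsw σ 0 t : ℝ)) *
        Real.exp (-(1 + α) * t) := by positivity
    calc a₁ ‖x t‖ ≤ W (σ.toFun t) (x t) := h1
      _ ≤ Real.exp (α * τ * (Nsw σ 0 t : ℝ)) * Real.exp (-(1 + α) * t) *
          W (σ.toFun 0) (x 0) := h2
      _ ≤ Real.exp (α * τ * (Nsw σ 0 t : ℝ)) * Real.exp (-(1 + α) * t) *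
          a₂ ‖x 0‖ := mul_le_mul_of_nonneg_left h3 hE
  refine ⟨main, bound2, ?_⟩
  obtain ⟨η, hη, hηmono, hηinv⟩ := exists_classKInf_inverse ha₁
  refine ⟨η, a₂, α, hη, ha₂, hα, ?_⟩
  intro σ x hsol t ht
  calc ‖x t‖ = η (a₁ ‖x t‖) := (hηinv _ (norm_nonneg _)).symm
    _ ≤ η (Real.exp (α * τ * (Nsw σ 0 t : ℝ)) * Real.exp (-(1 + α) * t) *
        a₂ ‖x 0‖) := hηmono (bound2 σ x hsol t ht)
end
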